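/- arXiv:1206.2048 — 6 statements merged into one kernel-verified Lean document; each statement's English description precedes it below -/
import Mathlib

section
/- Assume (λ,λ̄,J,κ) is a pcf-case, μ = lim inf_J(λ̄), and 𝒫̄ = ⟨𝒫_α : α < λ⟩ is a (λ,μ,<λ)-system. Then there exists a sequence f̄ = ⟨f_α : α < λ⟩ which obeys (λ,λ̄,J,κ,𝒫̄). -/
noncomputable section

open Cardinal Set Order

namespace PaperDefs

/-- `C` is a closed unbounded subset of the ordinal `δ`. -/
def IsClubIn (C : Set Ordinal) (δ : Ordinal.{0}) : Prop :=
  C ⊆ Set.Iio δ ∧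
  (∀ α < δ, ∃ β ∈ C, α < β) ∧
  (∀ α < δ, 0 < α → (∀ β < α, ∃ γ ∈ C, β < γ ∧ γ < α) → α ∈ C)

/-- `S` is a stationary subset of the ordinal `δ`. -/
def IsStationaryIn (S : Set Ordinal) (δ : Ordinal.{0}) : Prop :=
  ∀ C : Set Ordinal, IsClubIn C δ → (S ∩ C).Nonempty

/-- `S^λ_θ`, the set of ordinals below `λ` of cofinality `θ`. -/
def Scof (lam θ : Cardinal.{0}) : Set Ordinal :=
  {δ : Ordinal | δ < lam.ord ∧ δ.cof = θ}

/-- Membership in the ideal `Ǐ_θ[λ]`. -/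
def InIcheck (θ lam : Cardinal.{0}) (S : Set Ordinal) : Prop :=
  S ⊆ Scof lam θ ∧
  ∃ (a : Ordinal → Set Ordinal) (E : Set Ordinal),
    (∀ α : Ordinal, a α ⊆ Set.Iio α) ∧
    (∀ α : Ordinal, #(a α) < Cardinal.lift.{1} θ) ∧
    (∀ α β : Ordinal, β ∈ a α → a β = a α ∩ Set.Iio β) ∧
    IsClubIn E lam.ord ∧
    ∀ δ ∈ S ∩ E, ∃ e : Ordinal → Ordinal,
      StrictMonoOn e (Set.Iio θ.ord) ∧
      (∀ ε < θ.ord, e ε < δ) ∧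
      (∀ β < δ, ∃ ε < θ.ord, β < e ε) ∧
      (∀ ε < θ.ord, a (e ε) = e '' Set.Iio ε)

/-- The `γ`-th iterated cardinal successor `θ^{+γ}`. -/
def succIter (θ : Cardinal.{0}) (γ : Ordinal.{0}) : Cardinal.{0} :=
  Ordinal.limitRecOn γ θ (fun _ ih => Order.succ ih)
    (fun o _ ih => ⨆ i : (Set.Iio o), ih i.1 i.2)

/-- `J` is (the membership predicate of) a proper ideal on `ι` containing all singletons. -/
structure IsIdealOn {ι : Type*} (J : Set ι → Prop) : Prop where
  empty_mem : J ∅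
  mono : ∀ {s t : Set ι}, s ⊆ t → J t → J s
  union_mem : ∀ {s t : Set ι}, J s → J t → J (s ∪ t)
  singleton_mem : ∀ i : ι, J {i}
  proper : ¬ J Set.univ

/-- `f <_J g`. -/
def LtJ {ι : Type*} (J : Set ι → Prop) (f g : ι → Ordinal.{0}) : Prop :=
  J {i | ¬ f i < g i}

/-- The family `F` is `J`-free. -/
def FreeFam {ι : Type 1} (J : Set ι → Prop) (F : Set (ι → Ordinal.{0})) : Prop :=
  ∃ s : (ι → Ordinal.{0}) → Set ι,
    (∀ f ∈ F, J (s f)) ∧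
    ∀ f₁ ∈ F, ∀ f₂ ∈ F, f₁ ≠ f₂ → ∀ i, i ∉ s f₁ → i ∉ s f₂ → f₁ i ≠ f₂ i

/-- The family `F` is `(θ,J)`-free. -/
def FreeFamDeg {ι : Type 1} (J : Set ι → Prop) (θ : Cardinal.{0}) (F : Set (ι → Ordinal.{0})) : Prop :=
  ∀ F' ⊆ F, #F' < Cardinal.lift.{1} θ → FreeFam J F'

/-- The family `F` is `(θ₂,θ₁,J)`-free. -/
def FreeFamTwo {ι : Type 1} (J : Set ι → Prop) (θ₂ θ₁ : Cardinal.{0})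
    (F : Set (ι → Ordinal.{0})) : Prop :=
  ∀ F' ⊆ F, #F' < Cardinal.lift.{1} θ₂ →
    ∃ (P : Set (Set (ι → Ordinal.{0}))) (s : (ι → Ordinal.{0}) → Set ι),
      ⋃₀ P = F' ∧
      (∀ p ∈ P, ∀ q ∈ P, p ≠ q → Disjoint p q) ∧
      (∀ p ∈ P, #p < Cardinal.lift.{1} θ₁) ∧
      (∀ f ∈ F', J (s f)) ∧
      ∀ p₁ ∈ P, ∀ p₂ ∈ P, p₁ ≠ p₂ → ∀ f₁ ∈ p₁, ∀ f₂ ∈ p₂,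
        ∀ i, i ∉ s f₁ → i ∉ s f₂ → f₁ i ≠ f₂ i

/-- `J` is a `θ`-complete ideal: closed under unions of fewer than `θ` members. -/
def IdealComplete {ι : Type*} (J : Set ι → Prop) (θ : Cardinal.{0}) : Prop :=
  ∀ ε : Ordinal, ε < θ.ord → ∀ g : Ordinal → Set ι,
    (∀ i < ε, J (g i)) → J (⋃ i ∈ Set.Iio ε, g i)

/-- `comp(J) = sup {θ : J is θ-complete}`. -/
def IdealComp {ι : Type*} (J : Set ι → Prop) : Cardinal.{0} :=
  sSup {θ : Cardinal | IdealComplete J θ}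

/-- The canonical index type of size `κ`: the ordinals below `κ`. -/
abbrev KIdx (κ : Cardinal.{0}) : Type 1 := (Set.Iio κ.ord : Set Ordinal)

/-- `f̄ = ⟨f_α : α < λ⟩` is a `<_J`-increasing `<_J`-cofinal sequence in `∏_i λ_i`. -/
def IsPcfWitness {ι : Type 1} (J : Set ι → Prop) (lamb : ι → Cardinal.{0}) (lam : Cardinal.{0})
    (f : Ordinal.{0} → ι → Ordinal.{0}) : Prop :=
  (∀ α < lam.ord, ∀ i, f α i < (lamb i).ord) ∧
  (∀ α β : Ordinal, α < β → β < lam.ord → LtJ J (f α) (f β)) ∧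
  ∀ g : ι → Ordinal.{0}, (∀ i, g i < (lamb i).ord) → ∃ α < lam.ord, LtJ J g (f α)

/-- `(λ,λ̄,J,κ)` is a pcf-case. -/
def IsPcfCase (κ : Cardinal.{0}) (J : Set (KIdx κ) → Prop) (lamb : KIdx κ → Cardinal.{0})
    (lam : Cardinal.{0}) : Prop :=
  IsIdealOn J ∧ (∀ i, (lamb i).IsRegular ∧ κ < lamb i) ∧ lam.IsRegular ∧
    ∃ f : Ordinal → KIdx κ → Ordinal, IsPcfWitness J lamb lam f

/-- `μ = lim inf_J λ̄`: the least `χ` with `{i : λ_i < χ} ∉ J`. -/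
def IsLimInfJ {ι : Type 1} (J : Set ι → Prop) (lamb : ι → Cardinal.{0}) (μ : Cardinal.{0}) : Prop :=
  ¬ J {i | lamb i < μ} ∧ ∀ χ : Cardinal, χ < μ → J {i | lamb i < χ}

/-- `𝒫̄` is a `(λ,μ,<λ)`-system. -/
def IsSystem (lam μ : Cardinal.{0}) (P : Ordinal → Set (Set Ordinal)) : Prop :=
  (∀ α < lam.ord, ∀ a ∈ P α, a ⊆ Set.Iio α ∧ #a < Cardinal.lift.{1} μ) ∧
  (∀ α < lam.ord, ∀ a ∈ P α, ∀ β ∈ a, a ∩ Set.Iio β ∈ P β) ∧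
  ∀ α < lam.ord, #(P α) < Cardinal.lift.{1} lam

/-- `f̄` obeys `(λ,λ̄,J,κ,𝒫̄)`. -/
def Obeys {ι : Type 1} (J : Set ι → Prop) (lamb : ι → Cardinal.{0}) (lam : Cardinal.{0})
    (P : Ordinal → Set (Set Ordinal)) (f : Ordinal.{0} → ι → Ordinal.{0}) : Prop :=
  IsPcfWitness J lamb lam f ∧
  ∃ g : Set Ordinal → ι → Ordinal.{0},
    (∀ a b : Set Ordinal, (∃ α < lam.ord, a ∈ P α) → (∃ α < lam.ord, b ∈ P α) →
      (∃ γ : Ordinal, a = b ∩ Set.Iio γ) → a ≠ b →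
      ∀ i, #(b : Set Ordinal) < Cardinal.lift.{1} (lamb i) → g a i < g b i) ∧
    (∀ α < lam.ord, ∀ a ∈ P α, LtJ J (g a) (f α)) ∧
    ∀ α < lam.ord, ∀ a ∈ P α, ∀ β ∈ a, ∀ i,
      #(a : Set Ordinal) < Cardinal.lift.{1} (lamb i) → f β i < g a i

/-- `good''_θ(𝒫̄)`. -/
def GoodDblPrime (θ lam : Cardinal.{0}) (P : Ordinal → Set (Set Ordinal)) : Set Ordinal :=
  {δ : Ordinal | δ < lam.ord ∧ δ.cof = θ ∧ ∃ e : Ordinal → Ordinal,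
    StrictMonoOn e (Set.Iio θ.ord) ∧ (∀ ε < θ.ord, e ε < δ) ∧
    (∀ β < δ, ∃ ε < θ.ord, β < e ε) ∧
    ∀ ε < θ.ord, (e '' Set.Iio ε) ∈ P (e ε)}

/-- `δ` is a good (flat) point of `f̄` with respect to `J`. -/
def GoodPoint {ι : Type 1} (J : Set ι → Prop) (f : Ordinal.{0} → ι → Ordinal.{0})
    (δ : Ordinal.{0}) : Prop :=
  ∃ A : ι → Ordinal.{0} → Ordinal.{0},
    (∀ i, StrictMonoOn (A i) (Set.Iio δ.cof.ord)) ∧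
    (∀ α < δ, ∃ ε < δ.cof.ord, LtJ J (f α) (fun i => A i ε)) ∧
    ∀ ε < δ.cof.ord, ∃ α < δ, LtJ J (fun i => A i ε) (f α)

/-- `g` is a `<_J`-exact upper bound of `f̄ ↾ δ`. -/
def IsEub {ι : Type 1} (J : Set ι → Prop) (f : Ordinal.{0} → ι → Ordinal.{0}) (δ : Ordinal.{0})
    (g : ι → Ordinal.{0}) : Prop :=
  (∀ α < δ, LtJ J (f α) g) ∧ ∀ h : ι → Ordinal.{0}, LtJ J h g → ∃ α < δ, LtJ J h (f α)

/-- `δ` is a bad point: has an exact upper bound but is not good. -/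
def BadPoint {ι : Type 1} (J : Set ι → Prop) (f : Ordinal.{0} → ι → Ordinal.{0})
    (δ : Ordinal.{0}) : Prop :=
  (∃ g : ι → Ordinal.{0}, IsEub J f δ g) ∧ ¬ GoodPoint J f δ

/-- `δ` is strongly chaotic for `f̄`. -/
def SchPoint {ι : Type 1} (J : Set ι → Prop) (κ : Cardinal.{0})
    (f : Ordinal.{0} → ι → Ordinal.{0}) (δ : Ordinal.{0}) : Prop :=
  ∃ u : ι → Set Ordinal, (∀ i, #(u i) ≤ Cardinal.lift.{1} κ) ∧
    ∀ α < δ, ∃ g : ι → Ordinal.{0}, (∀ i, g i ∈ u i) ∧ ∃ β < δ, LtJ J (f α) g ∧ LtJ J g (f β)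

/-- `min((u ∪ {∞}) ∖ γ)`: the least element of `u` that is `≥ γ`, or `∞`. -/
def minAbove (u : Set Ordinal.{0}) (γ : Ordinal.{0}) : WithTop Ordinal :=
  haveI := Classical.propDecidable (∃ β ∈ u, γ ≤ β)
  if _ : ∃ β ∈ u, γ ≤ β then ((sInf {β | β ∈ u ∧ γ ≤ β} : Ordinal.{0}) : WithTop Ordinal) else ⊤

/-- `δ` is chaotic for `f̄`. -/
def ChPoint {ι : Type 1} (J : Set ι → Prop) (κ : Cardinal.{0})
    (f : Ordinal.{0} → ι → Ordinal.{0}) (δ : Ordinal.{0}) : Prop :=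
  ∃ u : ι → Set Ordinal, (∀ i, #(u i) ≤ Cardinal.lift.{1} κ) ∧
    ∀ α < δ, ∃ β : Ordinal, α < β ∧ β < δ ∧
      ¬ J {i | minAbove (u i) (f α i) < minAbove (u i) (f β i)}

/-- `f̄` is strongly-semi-`⟨θ,J⟩`-stable. -/
def StronglySemiStable {ι : Type 1} (J : Set ι → Prop) (θ : Cardinal.{0}) (lam : Ordinal.{0})
    (f : Ordinal.{0} → ι → Ordinal.{0}) : Prop :=
  ¬ ∃ (v u : Set Ordinal), v ⊆ Set.Iio lam ∧
    #v = Cardinal.lift.{1} θ ∧ #u < Cardinal.lift.{1} θ ∧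
    ∀ α ∈ v, ∀ β ∈ v, α < β →
      ¬ J {i | ¬ minAbove u (f α i) ≤ minAbove u (f β i)}

/-- `f̄` is strongly-semi-`(θ₂,θ₁,J)`-stable. -/
def StronglySemiStableRange {ι : Type 1} (J : Set ι → Prop) (θ₂ θ₁ : Cardinal.{0})
    (lam : Ordinal.{0}) (f : Ordinal.{0} → ι → Ordinal.{0}) : Prop :=
  ∀ θ : Cardinal, θ₁ ≤ θ → θ < θ₂ → StronglySemiStable J θ lam f

/-- `⟨f_α : α < α_*⟩` is a `(θ,J)`-free sequence. -/
def FreeSeq {ι : Type 1} (J : Set ι → Prop) (θ : Cardinal.{0})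
    (f : Ordinal.{0} → ι → Ordinal.{0}) (αstar : Ordinal.{0}) : Prop :=
  ∀ u : Set Ordinal, u ⊆ Set.Iio αstar → #u < Cardinal.lift.{1} θ →
    ∃ a : Ordinal → Set ι, (∀ α ∈ u, J (a α)) ∧
      ∀ α ∈ u, ∀ β ∈ u, α < β → ∀ i, i ∉ a α → i ∉ a β → f α i < f β i

end PaperDefs

namespace PaperDefs

theorem ltJ_trans {ι : Type*} {J : Set ι → Prop} (hJ : IsIdealOn J)
    {f g h : ι → Ordinal.{0}} (h1 : LtJ J f g) (h2 : LtJ J g h) : LtJ J f h := by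
  refine hJ.mono (t := {i | ¬ f i < g i} ∪ {i | ¬ g i < h i}) ?_ (hJ.union_mem h1 h2)
  intro i hi
  by_cases h1 : f i < g i
  · by_cases h2 : g i < h i
    · exact absurd (h1.trans h2) hi
    · exact Or.inr h2
  · exact Or.inl h1

def otype (a : Set Ordinal.{0}) : Ordinal.{1} := Ordinal.type ((· < ·) : a → a → Prop)

theorem otype_lt {a b : Set Ordinal.{0}} (γ : Ordinal) (hab : a = b ∩ Set.Iio γ)
    (hne : a ≠ b) : otype a < otype b := by
  have hsub : a ⊆ b := by rw [hab]; exact inter_subset_left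
  have hne' : (b \ a).Nonempty := by
    rcases Set.nonempty_of_ssubset (ssubset_of_subset_of_ne hsub hne) with ⟨x, hx⟩
    exact ⟨x, hx⟩
  set β0 := sInf (b \ a) with hβ0
  have hβ0mem : β0 ∈ b \ a := csInf_mem hne'
  have htop : ∀ x ∈ a, x < β0 := by
    intro x hx
    have hxγ : x < γ := by rw [hab] at hx; exact hx.2
    have : γ ≤ β0 := by
      by_contra h
      push_neg at h
      exact hβ0mem.2 (hab ▸ ⟨hβ0mem.1, h⟩)
    exact hxγ.trans_le this
  have hrev : ∀ x ∈ b, x < β0 → x ∈ a := by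
    intro x hx hlt
    by_contra hxa
    exact absurd (csInf_le (OrderBot.bddBelow _) (show x ∈ b \ a from ⟨hx, hxa⟩))
      (not_le_of_gt hlt)
  refine PrincipalSeg.ordinal_type_lt (α := a) (β := b) ?_
  refine PrincipalSeg.mk (RelEmbedding.mk ⟨fun x => ⟨x.1, hsub x.2⟩, ?_⟩ ?_) ⟨β0, hβ0mem.1⟩ ?_
  · intro x y h
    have := congrArg Subtype.val h
    exact Subtype.ext this
  · intro x y; exact Iff.rfl
  · intro y
    constructor
    · rintro ⟨x, rfl⟩; exact htop x.1 x.2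
    · intro h; exact ⟨⟨y.1, hrev y.1 y.2 h⟩, rfl⟩

theorem otype_lift_mem (a : Set Ordinal.{0}) (h : Small.{0} ↥a) :
    ∃ o : Ordinal.{0}, Ordinal.lift.{1} o = otype a := by
  have hcard : (otype a).card = #↥a := Ordinal.card_type _
  have h2 : #↥a = Cardinal.lift.{1} #(Shrink.{0} ↥a) := by
    have := Cardinal.lift_mk_shrink'.{1,0} ↥a
    rw [Cardinal.lift_id'] at this
    exact this.symm
  have h3 : otype a < Ordinal.lift.{1} ((Order.succ #(Shrink.{0} ↥a)).ord) := by
    have := Cardinal.lt_ord_succ_card (otype a)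
    rwa [hcard, h2, ← Cardinal.lift_succ, ← Cardinal.lift_ord] at this
  exact Ordinal.mem_range_lift_of_le h3.le

def otp (a : Set Ordinal.{0}) : Ordinal.{0} :=
  haveI := Classical.propDecidable (∃ o : Ordinal.{0}, Ordinal.lift.{1} o = otype a)
  if h : ∃ o : Ordinal.{0}, Ordinal.lift.{1} o = otype a then h.choose else 0

theorem otp_lift {a : Set Ordinal.{0}} (h : Small.{0} ↥a) :
    Ordinal.lift.{1} (otp a) = otype a := by
  rw [otp, dif_pos (otype_lift_mem a h)]
  exact (otype_lift_mem a h).choose_spec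

theorem otp_card {a : Set Ordinal.{0}} (h : Small.{0} ↥a) :
    Cardinal.lift.{1} (otp a).card = #↥a := by
  rw [Ordinal.lift_card, otp_lift h]
  exact Ordinal.card_type _

theorem otp_lt {a b : Set Ordinal.{0}} (hb : Small.{0} ↥b) (γ : Ordinal)
    (hab : a = b ∩ Set.Iio γ) (hne : a ≠ b) : otp a < otp b := by
  have hsub : a ⊆ b := by rw [hab]; exact inter_subset_left
  haveI := hb
  have ha : Small.{0} ↥a := small_subset hsub
  rw [← Ordinal.lift_lt.{1}, otp_lift ha, otp_lift hb]
  exact otype_lt γ hab hne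

theorem small_of_mk_lt_lift {X : Type 1} {c : Cardinal.{0}}
    (h : #X < Cardinal.lift.{1} c) : Small.{0} X := by
  obtain ⟨c', hc'⟩ := Cardinal.mem_range_lift_of_le h.le
  rw [← Cardinal.mk_out c'] at hc'
  have h2 : Cardinal.lift.{1} #(Quotient.out c') = Cardinal.lift.{0} #X := by
    rw [Cardinal.lift_id']; exact hc'
  rw [Cardinal.lift_mk_eq.{0,1,0}] at h2
  rcases h2 with ⟨e⟩
  exact Small.mk' e.symm


def GfD (κ : Cardinal.{0}) (lamb : KIdx κ → Cardinal.{0}) (F : Ordinal → KIdx κ → Ordinal.{0})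
    (a : Set Ordinal.{0}) (i : KIdx κ) : Ordinal.{0} :=
  haveI := Classical.propDecidable (#↥a < Cardinal.lift.{1} (lamb i))
  if #↥a < Cardinal.lift.{1} (lamb i) then sSup ((fun β => F β i + 1) '' a) + otp a else 0

theorem GfD_of_lt {κ : Cardinal.{0}} {lamb : KIdx κ → Cardinal.{0}}
    {F : Ordinal → KIdx κ → Ordinal.{0}} {a : Set Ordinal.{0}} {i : KIdx κ}
    (h : #↥a < Cardinal.lift.{1} (lamb i)) :
    GfD κ lamb F a i = sSup ((fun β => F β i + 1) '' a) + otp a := by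
  rw [GfD, if_pos h]

theorem GfD_of_not {κ : Cardinal.{0}} {lamb : KIdx κ → Cardinal.{0}}
    {F : Ordinal → KIdx κ → Ordinal.{0}} {a : Set Ordinal.{0}} {i : KIdx κ}
    (h : ¬ #↥a < Cardinal.lift.{1} (lamb i)) :
    GfD κ lamb F a i = 0 := by
  rw [GfD, if_neg h]

theorem GfD_congr {κ : Cardinal.{0}} {lamb : KIdx κ → Cardinal.{0}}
    {F₁ F₂ : Ordinal → KIdx κ → Ordinal.{0}} {a : Set Ordinal.{0}}
    (h : ∀ β ∈ a, F₁ β = F₂ β) : GfD κ lamb F₁ a = GfD κ lamb F₂ a := by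
  funext i
  have himg : (fun β => F₁ β i + 1) '' a = (fun β => F₂ β i + 1) '' a :=
    Set.image_congr (fun β hβ => by rw [h β hβ])
  rw [GfD, GfD, himg]

theorem lt_add_one' (x : Ordinal.{0}) : x < x + 1 := by
  rw [Ordinal.add_one_eq_succ]; exact Order.lt_succ _

/-- existence of an obeying sequence for a pcf-case. -/
theorem statement7 (κ lam μ : Cardinal.{0}) (J : Set (KIdx κ) → Prop)
    (lamb : KIdx κ → Cardinal.{0}) (P : Ordinal → Set (Set Ordinal))
    (hpcf : IsPcfCase κ J lamb lam)
    (hμ : IsLimInfJ J lamb μ)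
    (hP : IsSystem lam μ P) :
    ∃ f : Ordinal → KIdx κ → Ordinal, Obeys J lamb lam P f := by
  classical
  obtain ⟨hJ, hreg, hlam, f', hf'⟩ := hpcf
  have hlamord : Order.IsSuccLimit lam.ord := Cardinal.isSuccLimit_ord hlam.aleph0_le
  have hGbound : ∀ (t : Ordinal → Ordinal) (α : Ordinal), α < lam.ord →
      (∀ β < α, t β < lam.ord) → ∀ a ∈ P α, ∀ i,
      GfD κ lamb (fun β => f' (t β)) a i < (lamb i).ord := by
    intro t α hα ht a ha i
    obtain ⟨hasub, hacard⟩ := hP.1 α hα a ha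
    haveI hsm : Small.{0} ↥a := small_subset hasub
    have hregi := (hreg i).1
    have hordlim : Order.IsSuccLimit ((lamb i).ord) := Cardinal.isSuccLimit_ord hregi.aleph0_le
    by_cases hc : #↥a < Cardinal.lift.{1} (lamb i)
    · rw [GfD_of_lt hc]
      have h1 : sSup ((fun β => f' (t β) i + 1) '' a) < (lamb i).ord := by
        have himg : (fun β => f' (t β) i + 1) '' a
            = Set.range (fun x : Shrink.{0} ↥a =>
                f' (t ((equivShrink ↥a).symm x).1) i + 1) := by
          rw [Set.image_eq_range]
          exact (Function.Surjective.range_comp (equivShrink ↥a).symm.surjective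
            (fun x : ↥a => f' (t x.1) i + 1)).symm
        rw [himg]
        have hcard : #(Shrink.{0} ↥a) < ((lamb i).ord).cof := by
          rw [hregi.cof_eq]
          have h1' : Cardinal.lift.{1} #(Shrink.{0} ↥a) = #↥a := by
            have := Cardinal.lift_mk_shrink'.{1,0} ↥a
            rwa [Cardinal.lift_id'] at this
          have h2' := hc
          rw [← h1'] at h2'
          exact Cardinal.lift_lt.mp h2'
        have hval : ∀ x : Shrink.{0} ↥a,
            f' (t ((equivShrink ↥a).symm x).1) i + 1 < (lamb i).ord := by
          intro x
          have hβ : ((equivShrink ↥a).symm x).1 < α := hasub ((equivShrink ↥a).symm x).2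
          have := hf'.1 _ (ht _ hβ) i
          rw [Ordinal.add_one_eq_succ]
          exact hordlim.succ_lt this
        exact Ordinal.iSup_lt_ord hcard hval
      have h2 : otp a < (lamb i).ord := by
        rw [Cardinal.lt_ord]
        have h2' := hc
        rw [← otp_card hsm] at h2'
        exact Cardinal.lift_lt.mp h2'
      rw [Cardinal.lt_ord, Ordinal.card_add]
      exact Cardinal.add_lt_of_lt hregi.aleph0_le (Cardinal.lt_ord.mp h1) (Cardinal.lt_ord.mp h2)
    · rw [GfD_of_not hc, Cardinal.lt_ord]
      simpa using hregi.pos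
  have hex : ∀ (α : Ordinal) (t : Ordinal → Ordinal), ∃ γ : Ordinal,
      α < lam.ord → (∀ β < α, t β < lam.ord) →
      (α < γ ∧ γ < lam.ord ∧ (∀ β < α, t β < γ) ∧
        ∀ a ∈ P α, LtJ J (GfD κ lamb (fun β => f' (t β)) a) (f' γ)) := by
    intro α t
    by_cases hα : α < lam.ord
    swap
    · exact ⟨0, fun h => absurd h hα⟩
    by_cases ht : ∀ β < α, t β < lam.ord
    swap
    · exact ⟨0, fun _ h => absurd h ht⟩
    have hch : ∀ a : ↥(P α), ∃ δ : Ordinal, δ < lam.ord ∧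
        LtJ J (GfD κ lamb (fun β => f' (t β)) a.1) (f' δ) := by
      intro a
      obtain ⟨δ, hδ, hlt⟩ := hf'.2.2 _ (hGbound t α hα ht a.1 a.2)
      exact ⟨δ, hδ, hlt⟩
    choose D hD1 hD2 using hch
    haveI hPsm : Small.{0} ↥(P α) := small_of_mk_lt_lift (hP.2.2 α hα)
    set A := ⨆ x : Shrink.{0} ↥(Set.Iio α), t ((equivShrink ↥(Set.Iio α)).symm x).1 with hA
    set B := ⨆ x : Shrink.{0} ↥(P α), D ((equivShrink ↥(P α)).symm x) with hB
    have hcofeq : lam.ord.cof = lam := hlam.cof_eq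
    have hAlt : A < lam.ord := by
      refine Ordinal.iSup_lt_ord ?_ ?_
      · rw [hcofeq]
        have h1' : Cardinal.lift.{1} #(Shrink.{0} ↥(Set.Iio α)) = #↥(Set.Iio α) := by
          have := Cardinal.lift_mk_shrink'.{1,0} ↥(Set.Iio α)
          rwa [Cardinal.lift_id'] at this
        have h2' : Cardinal.lift.{1} #(Shrink.{0} ↥(Set.Iio α)) = Cardinal.lift.{1} α.card := by
          rw [h1', Ordinal.mk_Iio_ordinal]
        rw [Cardinal.lift_inj] at h2'
        rw [h2']
        exact Cardinal.lt_ord.mp hα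
      · intro x
        exact ht _ ((equivShrink ↥(Set.Iio α)).symm x).2
    have hBlt : B < lam.ord := by
      refine Ordinal.iSup_lt_ord ?_ ?_
      · rw [hcofeq]
        have h1' : Cardinal.lift.{1} #(Shrink.{0} ↥(P α)) = #↥(P α) := by
          have := Cardinal.lift_mk_shrink'.{1,0} ↥(P α)
          rwa [Cardinal.lift_id'] at this
        have h2' := hP.2.2 α hα
        rw [← h1'] at h2'
        exact Cardinal.lift_lt.mp h2'
      · intro x
        exact hD1 _
    set γ := max α (max A B) + 1 with hγdef
    have hγ2 : γ < lam.ord := by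
      rw [hγdef, Ordinal.add_one_eq_succ]
      exact hlamord.succ_lt (max_lt hα (max_lt hAlt hBlt))
    have hγ1 : α < γ := lt_of_le_of_lt (le_max_left _ _) (lt_add_one' _)
    refine ⟨γ, fun _ _ => ⟨hγ1, hγ2, ?_, ?_⟩⟩
    · intro β hβ
      have hle : t β ≤ A := by
        have := le_ciSup (f := fun x : Shrink.{0} ↥(Set.Iio α) =>
          t ((equivShrink ↥(Set.Iio α)).symm x).1) (Ordinal.bddAbove_range _)
          (equivShrink ↥(Set.Iio α) ⟨β, hβ⟩)
        simpa using this
      exact lt_of_le_of_lt (hle.trans ((le_max_left A B).trans (le_max_right _ _)))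
        (lt_add_one' _)
    · intro a ha
      have h1 := hD2 ⟨a, ha⟩
      have hDle : D ⟨a, ha⟩ ≤ B := by
        have := le_ciSup (f := fun x : Shrink.{0} ↥(P α) =>
          D ((equivShrink ↥(P α)).symm x)) (Ordinal.bddAbove_range _)
          (equivShrink ↥(P α) ⟨a, ha⟩)
        simpa using this
      have hDγ : D ⟨a, ha⟩ < γ :=
        lt_of_le_of_lt (hDle.trans ((le_max_right A B).trans (le_max_right _ _)))
          (lt_add_one' _)
      exact ltJ_trans hJ h1 (hf'.2.1 _ _ hDγ hγ2)
  obtain ⟨τ, τeq⟩ : ∃ τ : Ordinal → Ordinal, ∀ α,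
      τ α = (hex α (fun β => if h : β < α then τ β else 0)).choose := by
    refine ⟨WellFounded.fix (wellFounded_lt (α := Ordinal))
      (fun α ih => (hex α (fun β => if h : β < α then ih β h else 0)).choose), fun α => ?_⟩
    exact WellFounded.fix_eq _ _ _
  have htr : ∀ α, α < lam.ord → ∀ a ∈ P α,
      GfD κ lamb (fun β => f' (if h : β < α then τ β else 0)) a
        = GfD κ lamb (fun β => f' (τ β)) a := by
    intro α hα a ha
    refine GfD_congr (fun β hβ => ?_)
    have hβα : β < α := (hP.1 α hα a ha).1 hβ
    rw [dif_pos hβα]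
  have key : ∀ α, α < lam.ord → α < τ α ∧ τ α < lam.ord ∧ (∀ β < α, τ β < τ α) ∧
      ∀ a ∈ P α, LtJ J (GfD κ lamb (fun β => f' (τ β)) a) (f' (τ α)) := by
    intro α
    induction α using Ordinal.induction with
    | h α IH =>
    intro hα
    have htlt : ∀ β < α, (if h : β < α then τ β else 0) < lam.ord := by
      intro β hβ
      rw [dif_pos hβ]
      exact (IH β hβ (hβ.trans hα)).2.1
    have hs := (hex α (fun β => if h : β < α then τ β else 0)).choose_spec hα htlt
    rw [τeq α]
    refine ⟨hs.1, hs.2.1, ?_, ?_⟩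
    · intro β hβ
      have := hs.2.2.1 β hβ
      rwa [dif_pos hβ] at this
    · intro a ha
      have := hs.2.2.2 a ha
      rwa [htr α hα a ha] at this
  refine ⟨fun α => f' (τ α), ⟨?_, ?_, ?_⟩, GfD κ lamb (fun β => f' (τ β)), ?_, ?_, ?_⟩
  · intro α hα i
    exact hf'.1 _ (key α hα).2.1 i
  · intro α β hαβ hβ
    exact hf'.2.1 _ _ ((key β hβ).2.2.1 α hαβ) (key β hβ).2.1
  · intro g hg
    obtain ⟨δ, hδ, hlt⟩ := hf'.2.2 g hg
    exact ⟨δ, hδ, ltJ_trans hJ hlt (hf'.2.1 _ _ (key δ hδ).1 (key δ hδ).2.1)⟩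
  · rintro a b ⟨αa, hαa, haP⟩ ⟨αb, hαb, hbP⟩ ⟨γ0, hab⟩ hne i hbi
    have hbsub := (hP.1 αb hαb b hbP).1
    haveI hbsm : Small.{0} ↥b := small_subset hbsub
    have hsub : a ⊆ b := by rw [hab]; exact inter_subset_left
    haveI hasm : Small.{0} ↥a := small_subset hsub
    have hai : #↥a < Cardinal.lift.{1} (lamb i) :=
      lt_of_le_of_lt (Cardinal.mk_le_mk_of_subset hsub) hbi
    rw [GfD_of_lt hai, GfD_of_lt hbi]
    have h1 : sSup ((fun β => f' (τ β) i + 1) '' a)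
        ≤ sSup ((fun β => f' (τ β) i + 1) '' b) :=
      csSup_le_csSup' Ordinal.bddAbove_of_small (Set.image_mono hsub)
    have h2 : otp a < otp b := otp_lt hbsm γ0 hab hne
    exact lt_of_le_of_lt (add_le_add_left h1 _) (add_lt_add_right h2 _)
  · intro α hα a ha
    exact (key α hα).2.2.2 a ha
  · intro α hα a ha β hβ i hai
    rw [GfD_of_lt hai]
    haveI hsm : Small.{0} ↥a := small_subset (hP.1 α hα a ha).1
    have hmem : f' (τ β) i + 1 ∈ (fun β => f' (τ β) i + 1) '' a := ⟨β, hβ, rfl⟩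
    have h1 : f' (τ β) i + 1 ≤ sSup ((fun β => f' (τ β) i + 1) '' a) :=
      le_csSup Ordinal.bddAbove_of_small hmem
    exact lt_of_lt_of_le (lt_add_one' _) (h1.trans le_self_add)

end PaperDefs
end
end

section
/- Assume (λ,λ̄,J,κ) is a pcf-case, μ = lim inf_J(λ̄), and 𝒫̄ = ⟨𝒫_α : α < λ⟩ is a (λ,μ,<λ)-system. Then for every witness f̄ = ⟨f_α : α < λ⟩ of the pcf-case there is an unbounded set S ⊆ λ such that the re-indexed sequence ⟨f'_ξ : ξ < λ⟩, where f'_{otp(S∩α)} = f_α for α ∈ S, obeys (λ,λ̄,J,κ,𝒫̄). -/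
noncomputable section

open Cardinal Set Order

namespace PaperDefs



/-- order type (in `Ordinal.{1}`) of a set of ordinals -/
noncomputable def otp1 (a : Set Ordinal.{0}) : Ordinal.{1} :=
  Ordinal.type (Subrel ((· < ·) : Ordinal.{0} → Ordinal.{0} → Prop) (· ∈ a))

theorem otp1_mono {a b : Set Ordinal.{0}} (h : a ⊆ b) : otp1 a ≤ otp1 b := by
  refine RelEmbedding.ordinal_type_le ?_
  exact RelEmbedding.ofMonotone (Set.inclusion h) (fun x y hxy => hxy)

theorem otp1_lt {a b : Set Ordinal.{0}} (γ : Ordinal) (hab : a = b ∩ Set.Iio γ)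
    (hne : a ≠ b) : otp1 a < otp1 b := by
  have hsub : a ⊆ b := by rw [hab]; exact Set.inter_subset_left
  obtain ⟨β, hβb, hβa⟩ : ∃ β ∈ b, β ∉ a := by
    by_contra h
    push_neg at h
    exact hne (Set.Subset.antisymm hsub h)
  have hx : ∀ x ∈ a, x < β := by
    intro x hxa
    have hxγ : x < γ := (hab ▸ hxa).2
    have : ¬ β < γ := fun hc => hβa (hab ▸ ⟨hβb, hc⟩)
    exact lt_of_lt_of_le hxγ (le_of_not_gt this)
  have h1 : otp1 a ≤ Ordinal.typein (Subrel ((· < ·) : Ordinal.{0} → Ordinal.{0} → Prop) (· ∈ b)) ⟨β, hβb⟩ := by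
    rw [← Ordinal.type_subrel]
    refine RelEmbedding.ordinal_type_le ?_
    exact RelEmbedding.ofMonotone
      (fun x => ⟨⟨x.1, hsub x.2⟩, hx x.1 x.2⟩) (fun x y hxy => hxy)
  exact lt_of_le_of_lt h1 (Ordinal.typein_lt_type _ _)

theorem otp1_card (a : Set Ordinal.{0}) : (otp1 a).card = #a :=
  Ordinal.card_type _

theorem otp1_le_lift {a : Set Ordinal.{0}} {α : Ordinal} (h : a ⊆ Set.Iio α) :
    otp1 a ≤ Ordinal.lift.{1} α := by
  have := otp1_mono h
  refine this.trans_eq ?_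
  show Ordinal.type (Subrel _ (· ∈ Set.Iio α)) = _
  have : Set.Iio α = {b | b < α} := rfl
  rw [this]
  exact Ordinal.typein_ordinal α

/-- order type in `Ordinal.{0}` of a bounded set of ordinals -/
noncomputable def otp0 (a : Set Ordinal.{0}) : Ordinal.{0} :=
  sInf {o | Ordinal.lift.{1} o = otp1 a}

theorem lift_otp0 {a : Set Ordinal.{0}} {α : Ordinal} (h : a ⊆ Set.Iio α) :
    Ordinal.lift.{1} (otp0 a) = otp1 a := by
  obtain ⟨o, ho⟩ := Ordinal.mem_range_lift_of_le (otp1_le_lift h)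
  exact csInf_mem (⟨o, ho⟩ : {o | Ordinal.lift.{1} o = otp1 a}.Nonempty)

theorem otp0_lt {a b : Set Ordinal.{0}} {α : Ordinal} (hb : b ⊆ Set.Iio α) (γ : Ordinal)
    (hab : a = b ∩ Set.Iio γ) (hne : a ≠ b) : otp0 a < otp0 b := by
  have hsub : a ⊆ b := by rw [hab]; exact Set.inter_subset_left
  have ha := lift_otp0 (hsub.trans hb)
  have hbl := lift_otp0 hb
  rw [← Ordinal.lift_lt.{1}, ha, hbl]
  exact otp1_lt γ hab hne

theorem otp0_card {a : Set Ordinal.{0}} {α : Ordinal} (h : a ⊆ Set.Iio α) :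
    Cardinal.lift.{1} (otp0 a).card = #a := by
  rw [Ordinal.lift_card, lift_otp0 h, otp1_card]

/-- main sup bound: a set of `< c.ord` ordinals of size `< c` has sup `< c.ord` -/
theorem sSup_lt_ord' {c : Cardinal.{0}} (hc : c.IsRegular) {s : Set Ordinal.{0}}
    (hs : #s < Cardinal.lift.{1} c) (h : ∀ x ∈ s, x < c.ord) : sSup s < c.ord := by
  classical
  set ψ := Ordinal.ToType.mk (o := c.ord)
  set s₀ : Set c.ord.ToType := {y | (ψ.symm y : Ordinal) ∈ s} with hs₀
  have hrange : s = (fun y : s₀ => (ψ.symm y.1 : Ordinal)) '' Set.univ := by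
    ext x
    constructor
    · intro hx
      have hxlt : x < c.ord := h x hx
      refine ⟨⟨ψ ⟨x, hxlt⟩, ?_⟩, trivial, ?_⟩
      · show (ψ.symm (ψ ⟨x, hxlt⟩) : Ordinal) ∈ s
        simp [hx]
      · simp
    · rintro ⟨⟨y, hy⟩, -, rfl⟩
      exact hy
  have hcard : #s₀ < c := by
    have : #s = Cardinal.lift.{1} #s₀ := by
      have hinj : Function.Injective (fun y : c.ord.ToType => (ψ.symm y : Ordinal)) := by
        intro x y hxy
        have := Subtype.val_injective hxy
        simpa using ψ.symm.injective this
      have himg : s = (fun y : c.ord.ToType => (ψ.symm y : Ordinal)) '' s₀ := by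
        ext x
        constructor
        · intro hx
          have hxlt : x < c.ord := h x hx
          refine ⟨ψ ⟨x, hxlt⟩, ?_, by simp⟩
          show (ψ.symm (ψ ⟨x, hxlt⟩) : Ordinal) ∈ s
          simp [hx]
        · rintro ⟨y, hy, rfl⟩; exact hy
      have := Cardinal.mk_image_eq_lift _ s₀ hinj
      rw [himg]
      simpa using this
    rwa [this, Cardinal.lift_lt] at hs
  have hsup : sSup s = ⨆ y : s₀, (ψ.symm y.1 : Ordinal) := by
    rw [hrange, Set.image_univ]
    rfl
  rw [hsup]
  refine Ordinal.iSup_lt_ord ?_ ?_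
  · rwa [hc.cof_eq]
  · intro y
    exact h _ y.2



theorem ltJ_trans_s8 {ι : Type 1} {J : Set ι → Prop} (hJ : IsIdealOn J)
    {g1 g2 g3 : ι → Ordinal.{0}} (h12 : LtJ J g1 g2) (h23 : LtJ J g2 g3) : LtJ J g1 g3 := by
  refine hJ.mono ?_ (hJ.union_mem h12 h23)
  intro i hi
  by_contra hc
  simp only [Set.mem_union, Set.mem_setOf_eq, not_or, not_not] at hc
  exact hi (hc.1.trans hc.2)

theorem sSup_image_le_sSup_image {a b : Set Ordinal.{0}} (hsub : a ⊆ b) {F : Ordinal → Ordinal}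
    (hbdd : BddAbove (F '' b)) : sSup (F '' a) ≤ sSup (F '' b) := by
  rcases a.eq_empty_or_nonempty with rfl | hne
  · simp [csSup_empty]
  · exact csSup_le_csSup hbdd (hne.image F) (Set.image_mono hsub)

variable {κ : Cardinal.{0}}

def gofE (lamb : KIdx κ → Cardinal.{0}) (f : Ordinal → KIdx κ → Ordinal)
    (E : Ordinal → Ordinal) (a : Set Ordinal) (i : KIdx κ) : Ordinal :=
  if #a < Cardinal.lift.{1} (lamb i) then sSup ((fun β => f (E β) i + 1) '' a) + otp0 a else 0

theorem gofE_congr {lamb : KIdx κ → Cardinal.{0}} {f : Ordinal → KIdx κ → Ordinal}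
    {E E' : Ordinal → Ordinal} {a : Set Ordinal} (h : ∀ β ∈ a, E β = E' β) :
    gofE lamb f E a = gofE lamb f E' a := by
  funext i
  have himg : (fun β => f (E β) i + 1) '' a = (fun β => f (E' β) i + 1) '' a :=
    Set.image_congr (fun β hβ => by rw [h β hβ])
  simp only [gofE, himg]

theorem gofE_lt_ord {lam : Cardinal.{0}} {lamb : KIdx κ → Cardinal.{0}}
    {f : Ordinal → KIdx κ → Ordinal}
    (hreg : ∀ i, (lamb i).IsRegular) (hf1 : ∀ α < lam.ord, ∀ i, f α i < (lamb i).ord)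
    {E : Ordinal → Ordinal} {a : Set Ordinal} {α : Ordinal} (ha : a ⊆ Set.Iio α)
    (hE : ∀ β ∈ a, E β < lam.ord) (i : KIdx κ) : gofE lamb f E a i < (lamb i).ord := by
  have hpos : (0 : Cardinal) < lamb i := lt_of_lt_of_le aleph0_pos (hreg i).aleph0_le
  unfold gofE
  split
  case isTrue hc =>
    have hlim := Cardinal.isSuccLimit_ord (hreg i).aleph0_le
    have h1 : sSup ((fun β => f (E β) i + 1) '' a) < (lamb i).ord := by
      refine sSup_lt_ord' (hreg i) (lt_of_le_of_lt Cardinal.mk_image_le hc) ?_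
      rintro x ⟨β, hβ, rfl⟩
      have := hf1 (E β) (hE β hβ) i
      show f (E β) i + 1 < _
      rw [Ordinal.add_one_eq_succ]
      exact hlim.succ_lt this
    have h2 : otp0 a < (lamb i).ord := by
      rw [Cardinal.lt_ord]
      rw [← Cardinal.lift_lt.{0,1}, otp0_card ha]
      exact hc
    rw [Cardinal.lt_ord, Ordinal.card_add]
    exact Cardinal.add_lt_of_lt (hreg i).aleph0_le (Cardinal.lt_ord.mp h1) (Cardinal.lt_ord.mp h2)
  case isFalse hc =>
    rw [Cardinal.lt_ord, Ordinal.card_zero]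
    exact hpos

def SGood (lam : Cardinal.{0}) (J : Set (KIdx κ) → Prop) (lamb : KIdx κ → Cardinal.{0})
    (P : Ordinal → Set (Set Ordinal)) (f : Ordinal → KIdx κ → Ordinal)
    (α : Ordinal) (E : Ordinal → Ordinal) : Set Ordinal :=
  {ξ | ξ < lam.ord ∧ α ≤ ξ ∧ (∀ β < α, E β < ξ) ∧
    ∀ a ∈ P α, a ⊆ Set.Iio α → LtJ J (gofE lamb f E a) (f ξ)}

theorem SGood_nonempty {lam : Cardinal.{0}} {J : Set (KIdx κ) → Prop}
    {lamb : KIdx κ → Cardinal.{0}} {P : Ordinal → Set (Set Ordinal)}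
    {f : Ordinal → KIdx κ → Ordinal}
    (hJ : IsIdealOn J) (hreg : ∀ i, (lamb i).IsRegular) (hlam : lam.IsRegular)
    (hf : IsPcfWitness J lamb lam f)
    (hP3 : ∀ α < lam.ord, #(P α) < Cardinal.lift.{1} lam)
    {α : Ordinal} (hα : α < lam.ord) {E : Ordinal → Ordinal} (hE : ∀ β < α, E β < lam.ord) :
    (SGood lam J lamb P f α E).Nonempty := by
  classical
  have hlim := Cardinal.isSuccLimit_ord hlam.aleph0_le
  have hch : ∀ a : Set Ordinal, ∃ ξ, ξ < lam.ord ∧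
      (a ∈ P α → a ⊆ Set.Iio α → LtJ J (gofE lamb f E a) (f ξ)) := by
    intro a
    by_cases h : a ∈ P α ∧ a ⊆ Set.Iio α
    · obtain ⟨ξ, hξ, hlt⟩ := hf.2.2 (gofE lamb f E a)
        (fun i => gofE_lt_ord hreg hf.1 h.2 (fun β hβ => hE β (h.2 hβ)) i)
      exact ⟨ξ, hξ, fun _ _ => hlt⟩
    · exact ⟨0, hlim.pos, fun h1 h2 => absurd ⟨h1, h2⟩ h⟩
  choose Xi hXi1 hXi2 using hch
  set s1 : Set Ordinal := (fun β => E β + 1) '' Set.Iio α with hs1def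
  set s2 : Set Ordinal := Xi '' (P α) with hs2def
  have hb1 : ∀ x ∈ s1, x < lam.ord := by
    rintro x ⟨β, hβ, rfl⟩
    show E β + 1 < _
    rw [Ordinal.add_one_eq_succ]
    exact hlim.succ_lt (hE β hβ)
  have hb2 : ∀ x ∈ s2, x < lam.ord := by
    rintro x ⟨a, _, rfl⟩
    exact hXi1 a
  have hs1 : sSup s1 < lam.ord := by
    refine sSup_lt_ord' hlam ?_ hb1
    refine lt_of_le_of_lt Cardinal.mk_image_le ?_
    rw [Ordinal.mk_Iio_ordinal]
    rw [Cardinal.lift_lt]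
    exact Cardinal.lt_ord.mp hα
  have hs2 : sSup s2 < lam.ord := by
    refine sSup_lt_ord' hlam ?_ hb2
    exact lt_of_le_of_lt Cardinal.mk_image_le (hP3 α hα)
  set xi : Ordinal := max α (max (sSup s1) (sSup s2)) with hξdef
  have hξlt : xi < lam.ord := max_lt hα (max_lt hs1 hs2)
  refine ⟨xi, hξlt, le_max_left _ _, ?_, ?_⟩
  · intro β hβ
    have hmem : E β + 1 ∈ s1 := ⟨β, hβ, rfl⟩
    have hle : E β + 1 ≤ sSup s1 := le_csSup ⟨lam.ord, fun x hx => (hb1 x hx).le⟩ hmem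
    have : E β < E β + 1 := by
      rw [Ordinal.add_one_eq_succ]; exact Order.lt_succ _
    exact lt_of_lt_of_le this (hle.trans ((le_max_left _ _).trans (le_max_right _ _)))
  · intro a ha hsub
    have h1 := hXi2 a ha hsub
    have hle : Xi a ≤ xi := by
      refine le_trans (le_csSup ⟨lam.ord, fun x hx => (hb2 x hx).le⟩ ⟨a, ha, rfl⟩) ?_
      exact (le_max_right _ _).trans (le_max_right _ _)
    rcases eq_or_lt_of_le hle with heq | hlt
    · rwa [← heq]
    · exact ltJ_trans_s8 hJ h1 (hf.2.1 _ _ hlt hξlt)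

def eRec (lam : Cardinal.{0}) (J : Set (KIdx κ) → Prop) (lamb : KIdx κ → Cardinal.{0})
    (P : Ordinal → Set (Set Ordinal)) (f : Ordinal → KIdx κ → Ordinal) : Ordinal → Ordinal :=
  Ordinal.lt_wf.fix (C := fun _ => Ordinal)
    (fun α ih => sInf (SGood lam J lamb P f α (fun β => if h : β < α then ih β h else 0)))

theorem eRec_def (lam : Cardinal.{0}) (J : Set (KIdx κ) → Prop) (lamb : KIdx κ → Cardinal.{0})
    (P : Ordinal → Set (Set Ordinal)) (f : Ordinal → KIdx κ → Ordinal) (α : Ordinal) :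
    eRec lam J lamb P f α = sInf (SGood lam J lamb P f α
      (fun β => if _ : β < α then eRec lam J lamb P f β else 0)) :=
  WellFounded.fix_eq _ _ _

/-- every witness of a pcf-case has a re-indexing along an unbounded set of
indices which obeys `(λ,λ̄,J,κ,𝒫̄)`.  The unbounded set `S` is the range of the strictly
increasing enumeration `e`, and the re-indexed sequence is `ξ ↦ f (e ξ)`. -/

theorem statement8 (κ lam μ : Cardinal.{0}) (J : Set (KIdx κ) → Prop)
    (lamb : KIdx κ → Cardinal.{0}) (P : Ordinal → Set (Set Ordinal))
    (hpcf : IsPcfCase κ J lamb lam)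
    (hμ : IsLimInfJ J lamb μ)
    (hP : IsSystem lam μ P)
    (f : Ordinal → KIdx κ → Ordinal)
    (hf : IsPcfWitness J lamb lam f) :
    ∃ e : Ordinal → Ordinal,
      StrictMonoOn e (Set.Iio lam.ord) ∧
      (∀ ξ < lam.ord, e ξ < lam.ord) ∧
      (∀ β < lam.ord, ∃ ξ < lam.ord, β < e ξ) ∧
      Obeys J lamb lam P (fun ξ => f (e ξ)) := by
  obtain ⟨hJ, hreg', hlam, -⟩ := hpcf
  have hreg : ∀ i, (lamb i).IsRegular := fun i => (hreg' i).1
  have hlim := Cardinal.isSuccLimit_ord hlam.aleph0_le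
  set e : Ordinal → Ordinal := eRec lam J lamb P f with hedef
  have hmem : ∀ α < lam.ord,
      e α ∈ SGood lam J lamb P f α (fun β => if _ : β < α then e β else 0) := by
    intro α
    induction α using Ordinal.induction with
    | _ α IH =>
      intro hα
      have hE : ∀ β < α, (if _ : β < α then e β else 0) < lam.ord := by
        intro β hβ
        rw [dif_pos hβ]
        exact (IH β hβ (hβ.trans hα)).1
      have hne := SGood_nonempty hJ hreg hlam hf hP.2.2 hα hE
      rw [hedef, eRec_def]
      exact csInf_mem hne
  have helt : ∀ α < lam.ord, e α < lam.ord := fun α hα => (hmem α hα).1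
  have hege : ∀ α < lam.ord, α ≤ e α := fun α hα => (hmem α hα).2.1
  have hestrict : ∀ β α, β < α → α < lam.ord → e β < e α := by
    intro β α hβα hα
    have := (hmem α hα).2.2.1 β hβα
    simpa only [dif_pos hβα] using this
  have hgood : ∀ α < lam.ord, ∀ a ∈ P α, LtJ J (gofE lamb f e a) (f (e α)) := by
    intro α hα a ha
    have hsub : a ⊆ Set.Iio α := (hP.1 α hα a ha).1
    have h0 := (hmem α hα).2.2.2 a ha hsub
    have hcong : gofE lamb f (fun β => if _ : β < α then e β else 0) a = gofE lamb f e a :=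
      gofE_congr (fun β hβ => dif_pos (hsub hβ))
    rwa [hcong] at h0
  have hbddA : ∀ (b : Set Ordinal) (α : Ordinal), α < lam.ord → b ⊆ Set.Iio α → ∀ i : KIdx κ,
      BddAbove ((fun β => f (e β) i + 1) '' b) := by
    intro b α hα hsub i
    refine ⟨(lamb i).ord, ?_⟩
    rintro x ⟨β, hβ, rfl⟩
    have hβlt : β < lam.ord := (hsub hβ).trans hα
    have := hf.1 (e β) (helt β hβlt) i
    show f (e β) i + 1 ≤ _
    rw [Ordinal.add_one_eq_succ]
    exact Order.succ_le_of_lt this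
  refine ⟨e, ?_, helt, ?_, ?_, ?_⟩
  · intro x hx y hy hxy
    exact hestrict x y hxy hy
  · intro β hβ
    have hs : succ β < lam.ord := hlim.succ_lt hβ
    exact ⟨succ β, hs, lt_of_lt_of_le (Order.lt_succ β) (hege _ hs)⟩
  · refine ⟨fun ξ hξ i => hf.1 (e ξ) (helt ξ hξ) i,
      fun α β hαβ hβ => hf.2.1 (e α) (e β) (hestrict α β hαβ hβ) (helt β hβ), ?_⟩
    intro g hg
    obtain ⟨α, hα, hlt⟩ := hf.2.2 g hg
    have hs : succ α < lam.ord := hlim.succ_lt hα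
    have hlt2 : α < e (succ α) := lt_of_lt_of_le (Order.lt_succ α) (hege _ hs)
    exact ⟨succ α, hs, ltJ_trans_s8 hJ hlt (hf.2.1 α (e (succ α)) hlt2 (helt _ hs))⟩
  · refine ⟨gofE lamb f e, ?_, ?_, ?_⟩
    · rintro a b ⟨α₁, hα₁, ha⟩ ⟨α₂, hα₂, hb⟩ ⟨γ, hγ⟩ hne i hbi
      have hsubb : b ⊆ Set.Iio α₂ := (hP.1 α₂ hα₂ b hb).1
      have hab : a ⊆ b := by rw [hγ]; exact Set.inter_subset_left
      have hai : #a < Cardinal.lift.{1} (lamb i) :=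
        lt_of_le_of_lt (Cardinal.mk_le_mk_of_subset hab) hbi
      have hbdd := hbddA b α₂ hα₂ hsubb i
      show gofE lamb f e a i < gofE lamb f e b i
      unfold gofE
      rw [if_pos hai, if_pos hbi]
      calc sSup ((fun β => f (e β) i + 1) '' a) + otp0 a
          ≤ sSup ((fun β => f (e β) i + 1) '' b) + otp0 a :=
            add_le_add_left (sSup_image_le_sSup_image hab hbdd) _
        _ < sSup ((fun β => f (e β) i + 1) '' b) + otp0 b := by
            have := otp0_lt hsubb γ hγ hne
            exact add_lt_add_right this _
    · intro α hα a ha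
      exact hgood α hα a ha
    · intro α hα a ha β hβ i hai
      have hsub : a ⊆ Set.Iio α := (hP.1 α hα a ha).1
      have hbdd := hbddA a α hα hsub i
      show f (e β) i < gofE lamb f e a i
      unfold gofE
      rw [if_pos hai]
      have hmemi : f (e β) i + 1 ∈ (fun β => f (e β) i + 1) '' a := ⟨β, hβ, rfl⟩
      have h1 : f (e β) i < f (e β) i + 1 := by
        rw [Ordinal.add_one_eq_succ]; exact Order.lt_succ _
      exact lt_of_lt_of_le h1 ((le_csSup hbdd hmemi).trans le_self_add)

end PaperDefs
end
end

section
/- Assume (λ,λ̄,J,κ) is a pcf-case, μ = lim inf_J(λ̄), 𝒫̄ is a (λ,μ,<λ)-system, f̄ = ⟨f_α : α < λ⟩ obeys (λ,λ̄,J,κ,𝒫̄), and θ is a regular cardinal with κ < θ < lim inf_J(λ̄). Then good''_θ(𝒫̄) ⊆ S_gd[f̄,J], i.e. every δ ∈ good''_θ(𝒫̄) is good (flat) for f̄. -/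
noncomputable section

open Cardinal Set Order

namespace PaperDefs

/-- if `f̄` obeys `(λ,λ̄,J,κ,𝒫̄)` and `κ < θ < lim inf_J(λ̄)` is regular
then `good''_θ(𝒫̄) ⊆ S_gd[f̄,J]`. -/
theorem statement9 (κ lam μ θ : Cardinal.{0}) (J : Set (KIdx κ) → Prop)
    (lamb : KIdx κ → Cardinal.{0}) (P : Ordinal → Set (Set Ordinal))
    (f : Ordinal → KIdx κ → Ordinal)
    (hpcf : IsPcfCase κ J lamb lam)
    (hμ : IsLimInfJ J lamb μ)
    (hP : IsSystem lam μ P)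
    (hf : Obeys J lamb lam P f)
    (hθ : θ.IsRegular) (hκθ : κ < θ) (hθμ : θ < μ) :
    ∀ δ ∈ GoodDblPrime θ lam P, GoodPoint J f δ := by
  obtain ⟨hJ, hlamb, hlamreg, -⟩ := hpcf
  obtain ⟨hwit, g, hgmono, hglt, hggt⟩ := hf
  rintro δ ⟨hδlam, hδcof, e, he_mono, he_lt, he_cof, he_P⟩
  have hS : J {i | lamb i < θ} := hμ.2 θ hθμ
  set S : Set (KIdx κ) := {i | lamb i < θ} with hSdef
  -- a helper to establish LtJ statements modulo two small sets
  have hLtJ : ∀ (u v : KIdx κ → Ordinal) (s t : Set (KIdx κ)), J s → J t →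
      (∀ i, i ∉ s → i ∉ t → u i < v i) → LtJ J u v := by
    intro u v s t hs ht h
    refine hJ.mono ?_ (hJ.union_mem hs ht)
    intro i hi
    by_contra h'
    simp only [Set.mem_union] at h'
    push_neg at h'
    exact hi (h i h'.1 h'.2)
  -- cardinality of the initial segments
  have hcard : ∀ ζ, ζ < θ.ord → ∀ i : KIdx κ, i ∉ S →
      #(e '' Set.Iio ζ) < Cardinal.lift.{1} (lamb i) := by
    intro ζ hζ i hi
    have h1 : #(e '' Set.Iio ζ) ≤ #(Set.Iio ζ) := Cardinal.mk_image_le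
    have h2 : #(Set.Iio ζ) = Cardinal.lift.{1} ζ.card := Ordinal.mk_Iio_ordinal ζ
    have h3 : ζ.card < θ := Cardinal.lt_ord.mp hζ
    have h4 : θ ≤ lamb i := not_lt.mp hi
    calc #(e '' Set.Iio ζ) ≤ #(Set.Iio ζ) := h1
      _ = Cardinal.lift.{1} ζ.card := h2
      _ < Cardinal.lift.{1} (lamb i) :=
        Cardinal.lift_lt.mpr (lt_of_lt_of_le h3 h4)
  -- each e ζ is below lam.ord
  have helam : ∀ ζ, ζ < θ.ord → e ζ < lam.ord := fun ζ hζ => lt_trans (he_lt ζ hζ) hδlam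
  -- initial segment structure
  have hseg : ∀ ε ζ, ε < ζ → ζ < θ.ord →
      e '' Set.Iio ε = (e '' Set.Iio ζ) ∩ Set.Iio (e ε) := by
    intro ε ζ hεζ hζ
    have hε : ε < θ.ord := lt_trans hεζ hζ
    ext x
    constructor
    · rintro ⟨η, hη, rfl⟩
      have hη' : η < θ.ord := lt_trans (lt_trans hη hεζ) hζ
      exact ⟨⟨η, lt_trans hη hεζ, rfl⟩, he_mono hη' hε hη⟩
    · rintro ⟨⟨η, hη, rfl⟩, hlt⟩
      have hη' : η < θ.ord := lt_trans hη hζ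
      refine ⟨η, ?_, rfl⟩
      by_contra h
      have hle : ε ≤ η := le_of_not_gt h
      have hlt' : e η < e ε := hlt
      rcases lt_or_eq_of_le hle with h' | h'
      · exact absurd (he_mono hε hη' h') (not_lt.mpr (le_of_lt hlt'))
      · subst h'; exact lt_irrefl _ hlt'
  have hne : ∀ ε ζ, ε < ζ → ζ < θ.ord → e '' Set.Iio ε ≠ e '' Set.Iio ζ := by
    intro ε ζ hεζ hζ h
    have hε : ε < θ.ord := lt_trans hεζ hζ
    have : e ε ∈ e '' Set.Iio ε := h ▸ ⟨ε, hεζ, rfl⟩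
    obtain ⟨η, hη, heq⟩ := this
    have : e η < e ε := he_mono (lt_trans hη hε) hε hη
    exact absurd heq (ne_of_lt this)
  -- the approximating sequence
  set A : KIdx κ → Ordinal → Ordinal :=
    fun i ε => if lamb i < θ then ε else g (e '' Set.Iio ε) i with hAdef
  have hδcoford : δ.cof.ord = θ.ord := by rw [hδcof]
  refine ⟨A, ?_, ?_, ?_⟩
  · -- strict monotonicity
    intro i ε hε ζ hζ hεζ
    rw [hδcoford] at hε hζ
    simp only [hAdef]
    by_cases hi : lamb i < θ
    · simp [hi, hεζ]
    · simp only [hi, if_false]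
      exact hgmono (e '' Set.Iio ε) (e '' Set.Iio ζ)
        ⟨e ε, helam ε hε, he_P ε hε⟩ ⟨e ζ, helam ζ hζ, he_P ζ hζ⟩
        ⟨e ε, hseg ε ζ hεζ hζ⟩ (hne ε ζ hεζ hζ) i (hcard ζ hζ i hi)
  · -- f α is eventually below some A · ε
    intro α hα
    obtain ⟨ε, hε, hαε⟩ := he_cof α hα
    have hζ : ε + 1 < θ.ord := (Cardinal.isSuccLimit_ord hθ.1).succ_lt hε
    refine ⟨ε + 1, hδcoford ▸ hζ, ?_⟩
    have hinc : J {i | ¬ f α i < f (e ε) i} :=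
      hwit.2.1 α (e ε) hαε (helam ε hε)
    refine hLtJ _ _ _ S hinc hS ?_
    intro i hi1 hi2
    have h1 : f α i < f (e ε) i := not_not.mp fun h => hi1 h
    have h2 : f (e ε) i < g (e '' Set.Iio (ε + 1)) i :=
      hggt (e (ε + 1)) (helam _ hζ) (e '' Set.Iio (ε + 1)) (he_P _ hζ)
        (e ε) ⟨ε, lt_succ ε, rfl⟩ i (hcard _ hζ i hi2)
    have hAi : A i (ε + 1) = g (e '' Set.Iio (ε + 1)) i := if_neg hi2
    rw [hAi]
    exact lt_trans h1 h2
  · -- each A · ε is below some f α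
    intro ε hε
    rw [hδcoford] at hε
    refine ⟨e ε, he_lt ε hε, ?_⟩
    have hglt' : J {i | ¬ g (e '' Set.Iio ε) i < f (e ε) i} :=
      hglt (e ε) (helam ε hε) (e '' Set.Iio ε) (he_P ε hε)
    refine hLtJ _ _ _ S hglt' hS ?_
    intro i hi1 hi2
    have hAi : A i ε = g (e '' Set.Iio ε) i := if_neg hi2
    rw [hAi]
    exact not_not.mp fun h => hi1 h

end PaperDefs
end
end

section
/- Let J be an ideal on a cardinal κ and let θ₁ ≤ θ₂ be cardinals with θ₁ regular. If ℱ ⊆ ^κOrd is (θ₂⁺,θ₁,J)-free, then ℱ is ⟨θ₂,θ₁,J⟩-free, i.e. every ℱ' ⊆ ℱ of cardinality θ₂ has a J-free subset of cardinality θ₁. -/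
noncomputable section

open Cardinal Set Order

namespace PaperDefs

/-- a `(θ₂⁺,θ₁,J)`-free family is `⟨θ₂,θ₁,J⟩`-free: every subfamily of
cardinality `θ₂` has a `J`-free subfamily of cardinality `θ₁`. -/
theorem statement15 (κ θ₁ θ₂ : Cardinal.{0}) (hθ₁ : θ₁.IsRegular) (h12 : θ₁ ≤ θ₂)
    (J : Set (KIdx κ) → Prop) (hJ : IsIdealOn J)
    (F : Set (KIdx κ → Ordinal))
    (hfree : FreeFamTwo J (Order.succ θ₂) θ₁ F) :
    ∀ F' ⊆ F, #F' = Cardinal.lift.{1} θ₂ →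
      ∃ F'' ⊆ F', #F'' = Cardinal.lift.{1} θ₁ ∧ FreeFam J F'' := by
  intro F' hF'F hcard
  obtain ⟨P, s, hPU, hPdisj, hPsmall, hs, hcross⟩ :=
    hfree F' hF'F (by rw [hcard]; exact Cardinal.lift_lt.2 (Order.lt_succ θ₂))
  have hreg : (Cardinal.lift.{1} θ₁).IsRegular := by
    refine ⟨Cardinal.aleph0_le_lift.2 hθ₁.1, ?_⟩
    rw [← Cardinal.lift_ord, ← Ordinal.lift_cof]
    exact Cardinal.lift_le.2 hθ₁.2
  classical
  set P' : Set (Set (KIdx κ → Ordinal)) := {p ∈ P | p.Nonempty} with hP'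
  have hUP' : ⋃₀ P' = F' := by
    rw [← hPU]
    apply Set.Subset.antisymm
    · exact Set.sUnion_subset_sUnion fun p hp => hp.1
    · rintro x ⟨p, hp, hx⟩
      exact ⟨p, ⟨hp, ⟨x, hx⟩⟩, hx⟩
  have hP'big : Cardinal.lift.{1} θ₁ ≤ #P' := by
    by_contra hlt
    push_neg at hlt
    have h1 : #F' < Cardinal.lift.{1} θ₁ := by
      rw [← hUP']
      apply lt_of_le_of_lt (Cardinal.mk_sUnion_le _)
      apply Cardinal.mul_lt_of_lt hreg.aleph0_le hlt
      apply Cardinal.iSup_lt_of_isRegular hreg hlt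
      exact fun p => hPsmall p.1 p.2.1
    rw [hcard] at h1
    exact absurd (Cardinal.lift_le.2 h12) (not_le_of_gt h1)
  obtain ⟨S, hSP', hScard⟩ := Cardinal.le_mk_iff_exists_subset.1 hP'big
  set pick : Set (KIdx κ → Ordinal) → (KIdx κ → Ordinal) :=
    fun p => if h : p.Nonempty then h.some else fun _ => 0 with hpickdef
  have hpickmem : ∀ p ∈ S, pick p ∈ p := by
    intro p hp
    have hne : p.Nonempty := (hSP' hp).2
    simp only [hpickdef, dif_pos hne]
    exact hne.some_mem
  have hinj : Set.InjOn pick S := by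
    intro p hp q hq hpq
    by_contra hne
    have hd := hPdisj p (hSP' hp).1 q (hSP' hq).1 hne
    exact Set.disjoint_left.1 hd (hpickmem p hp) (hpq ▸ hpickmem q hq)
  refine ⟨pick '' S, ?_, ?_, ?_⟩
  · rintro f ⟨p, hp, rfl⟩
    rw [← hPU]
    exact Set.subset_sUnion_of_mem (hSP' hp).1 (hpickmem p hp)
  · rw [Cardinal.mk_image_eq_of_injOn _ _ hinj, hScard]
  · refine ⟨s, ?_, ?_⟩
    · rintro f ⟨p, hp, rfl⟩
      apply hs
      rw [← hPU]
      exact Set.subset_sUnion_of_mem (hSP' hp).1 (hpickmem p hp)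
    · rintro f₁ ⟨p₁, hp₁, rfl⟩ f₂ ⟨p₂, hp₂, rfl⟩ hne i hi₁ hi₂
      have hpne : p₁ ≠ p₂ := fun h => hne (h ▸ rfl)
      exact hcross p₁ (hSP' hp₁).1 p₂ (hSP' hp₂).1 hpne _ (hpickmem p₁ hp₁)
        _ (hpickmem p₂ hp₂) i hi₁ hi₂

end PaperDefs
end
end

section
/- Let J be an ideal on a cardinal κ and f̄ = ⟨f_α : α < λ⟩ a <_J-increasing sequence of functions κ → Ord. If δ ≤ λ is chaotic for f̄ (δ ∈ S_ch[f̄,J]), then there is a club e of δ such that every α ∈ e with cf(α) > κ is chaotic for f̄. -/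
noncomputable section

open Cardinal Set Order

namespace PaperDefs

theorem minAbove_mono (u : Set Ordinal.{0}) {a b : Ordinal} (h : a ≤ b) :
    minAbove u a ≤ minAbove u b := by
  classical
  unfold minAbove
  by_cases hb : ∃ β ∈ u, b ≤ β
  · have ha : ∃ β ∈ u, a ≤ β := by
      obtain ⟨β, hβu, hβ⟩ := hb
      exact ⟨β, hβu, h.trans hβ⟩
    rw [dif_pos hb, dif_pos ha]
    have hne : {β | β ∈ u ∧ b ≤ β}.Nonempty := by
      obtain ⟨β, hβu, hβ⟩ := hb; exact ⟨β, hβu, hβ⟩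
    have hmem := csInf_mem hne
    have : sInf {β | β ∈ u ∧ a ≤ β} ≤ sInf {β | β ∈ u ∧ b ≤ β} :=
      csInf_le' ⟨hmem.1, h.trans hmem.2⟩
    exact_mod_cast this
  · rw [dif_neg hb]
    exact le_top

theorem aleph0_le_of_ideal (κ : Cardinal.{0}) (J : Set (KIdx κ) → Prop) (hJ : IsIdealOn J) :
    ℵ₀ ≤ κ := by
  by_contra hlt
  push_neg at hlt
  have hfin : Finite (KIdx κ) := by
    rw [← Cardinal.mk_lt_aleph0_iff, Ordinal.mk_Iio_ordinal, Cardinal.card_ord]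
    exact_mod_cast (Cardinal.lift_lt_aleph0).2 hlt
  have huniv : (Set.univ : Set (KIdx κ)).Finite := Set.finite_univ
  have : ∀ s : Set (KIdx κ), s.Finite → J s := by
    intro s hs
    refine Set.Finite.induction_on s hs hJ.empty_mem ?_
    intro a t _ _ ih
    rw [Set.insert_eq]
    exact hJ.union_mem (hJ.singleton_mem _) ih
  exact hJ.proper (this _ huniv)

end PaperDefs

namespace PaperDefs

/-- chaotic points are club-often chaotic below. -/
theorem statement17 (κ : Cardinal.{0}) (J : Set (KIdx κ) → Prop) (hJ : IsIdealOn J)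
    (lam : Ordinal) (f : Ordinal → KIdx κ → Ordinal)
    (hinc : ∀ α β : Ordinal, α < β → β < lam → LtJ J (f α) (f β))
    (δ : Ordinal) (hδ : δ ≤ lam)
    (hch : ChPoint J κ f δ) :
    ∃ e : Set Ordinal, IsClubIn e δ ∧ ∀ α ∈ e, κ < α.cof → ChPoint J κ f α := by
  have hκ : ℵ₀ ≤ κ := aleph0_le_of_ideal κ J hJ
  have hlt1 : ∀ x : Ordinal, x < x + 1 := fun x => by
    rw [Ordinal.add_one_eq_succ]; exact Order.lt_succ x
  rcases Ordinal.zero_or_succ_or_isSuccLimit δ with rfl | ⟨ζ, rfl⟩ | hδlim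
  · exact ⟨∅, ⟨Set.empty_subset _, fun α hα => absurd hα (show (0:Ordinal) ≤ α from zero_le).not_gt,
      fun α hα => absurd hα (show (0:Ordinal) ≤ α from zero_le).not_gt⟩,
      fun α hα => (Set.notMem_empty α hα).elim⟩
  · obtain ⟨u, -, hu⟩ := hch
    obtain ⟨β, hβ1, hβ2, -⟩ := hu ζ (Order.lt_succ ζ)
    exact absurd hβ1 (not_lt.2 (Order.lt_succ_iff.1 hβ2))
  obtain ⟨u, hucard, hu⟩ := hch
  set θ := δ.cof.ord with hθ
  obtain ⟨fs, hfs⟩ := Ordinal.exists_fundamental_sequence δ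
  set c : Ordinal → Ordinal := fun ξ => if h : ξ < θ then fs ξ h + 1 else 0 with hc
  have hcδ : ∀ ξ, ξ < θ → c ξ < δ := by
    intro ξ h
    simp only [hc, dif_pos h, Ordinal.add_one_eq_succ]
    exact hδlim.succ_lt (by rw [← hfs.blsub_eq]; exact Ordinal.lt_blsub _ _ _)
  have hcmono : ∀ ξ₁ ξ₂, ξ₁ < ξ₂ → ξ₂ < θ → c ξ₁ < c ξ₂ := by
    intro ξ₁ ξ₂ h12 h2
    have h1 : ξ₁ < θ := h12.trans h2
    simp only [hc, dif_pos h1, dif_pos h2, Ordinal.add_one_eq_succ]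
    exact Order.succ_lt_succ (hfs.strict_mono h1 h2 h12)
  have hccof : ∀ b, b < δ → ∃ ξ, ξ < θ ∧ b < c ξ := by
    intro b hb
    rw [← hfs.blsub_eq, Ordinal.lt_blsub_iff] at hb
    obtain ⟨ξ, hξ, hle⟩ := hb
    refine ⟨ξ, hξ, ?_⟩
    simp only [hc, dif_pos hξ]
    exact hle.trans_lt (by rw [dif_pos (show ξ < θ from hξ)]; exact hlt1 _)
  set B : Ordinal → Ordinal := fun γ => if h : γ < δ then (hu γ h).choose else 0 with hBdef
  have hBspec : ∀ γ (h : γ < δ), γ < B γ ∧ B γ < δ ∧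
      ¬ J {i | minAbove (u i) (f γ i) < minAbove (u i) (f (B γ) i)} := by
    intro γ h
    simp only [hBdef, dif_pos h]
    exact (hu γ h).choose_spec
  have hkey : ∀ γ γ' β, γ < γ' → γ' < δ →
      ¬ J {i | minAbove (u i) (f γ' i) < minAbove (u i) (f β i)} →
      ¬ J {i | minAbove (u i) (f γ i) < minAbove (u i) (f β i)} := by
    intro γ γ' β h1 h2 hnJ hJT
    apply hnJ
    have hJN : J {i | ¬ f γ i < f γ' i} := hinc γ γ' h1 (h2.trans_le hδ)
    refine hJ.mono ?_ (hJ.union_mem hJT hJN)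
    intro i hi
    by_cases hfi : f γ i < f γ' i
    · exact Or.inl (lt_of_le_of_lt (minAbove_mono (u i) hfi.le) hi)
    · exact Or.inr hfi
  rcases le_or_gt δ.cof κ with hcase | hcase
  · -- Case cf δ ≤ κ : no point of the club has cofinality > κ
    refine ⟨{α | α < δ ∧ 0 < α ∧ ((∃ ξ, ξ < θ ∧ α = c ξ) ∨
        ∀ γ < α, ∃ ξ, ξ < θ ∧ γ < c ξ ∧ c ξ < α)}, ⟨?_, ?_, ?_⟩, ?_⟩
    · intro α hα; exact hα.1
    · intro α₀ hα₀
      obtain ⟨ξ, hξθ, hξ⟩ := hccof α₀ hα₀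
      exact ⟨c ξ, ⟨hcδ ξ hξθ, (show (0:Ordinal) ≤ α₀ from zero_le).trans_lt hξ, Or.inl ⟨ξ, hξθ, rfl⟩⟩, hξ⟩
    · intro α hαδ hα0 hcl
      refine ⟨hαδ, hα0, Or.inr ?_⟩
      intro γ hγ
      obtain ⟨γ₁, hγ₁e, hγγ₁, hγ₁α⟩ := hcl γ hγ
      rcases hγ₁e.2.2 with ⟨ξ, hξθ, hceq⟩ | hlim
      · exact ⟨ξ, hξθ, hceq ▸ hγγ₁, hceq ▸ hγ₁α⟩
      · obtain ⟨ξ, hξθ, h1, h2⟩ := hlim γ hγγ₁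
        exact ⟨ξ, hξθ, h1, h2.trans hγ₁α⟩
    · intro α hα hcof
      exfalso
      rcases hα.2.2 with ⟨ξ, hξθ, hceq⟩ | hlim
      · have h1 : Ordinal.cof α = 1 := by
          rw [hceq]
          simp only [hc, dif_pos hξθ, Ordinal.add_one_eq_succ]
          exact Ordinal.cof_succ _
        rw [h1] at hcof
        exact (hκ.trans_lt hcof).not_ge Cardinal.one_lt_aleph0.le
      · have hbα : Ordinal.bsup θ (fun ξ _ => if c ξ < α then c ξ else 0) < α := by
          apply Ordinal.bsup_lt_ord
          · rw [hθ, Cardinal.card_ord]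
            exact hcase.trans_lt hcof
          · intro i hi
            split
            · assumption
            · exact hα.2.1
        obtain ⟨ξ, hξθ, h1, h2⟩ := hlim _ hbα
        have h3 : c ξ ≤ Ordinal.bsup θ (fun ξ _ => if c ξ < α then c ξ else 0) := by
          have := Ordinal.le_bsup (fun ξ (_ : ξ < θ) => if c ξ < α then c ξ else 0) ξ hξθ
          rwa [if_pos h2] at this
        exact absurd h1 h3.not_gt
  · -- Case κ < cf δ
    have hθlim : Order.IsSuccLimit θ := Cardinal.isSuccLimit_ord (hκ.trans hcase.le)
    have hθsucc : ∀ x : Ordinal, x < θ → x + 1 < θ := fun x h => by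
      rw [Ordinal.add_one_eq_succ]; exact hθlim.succ_lt h
    have hθcof : θ.cof = δ.cof := Ordinal.cof_cof δ
    set k : Ordinal → Ordinal := fun ξ =>
      if h : ξ < θ then (hccof (B (c ξ)) (hBspec (c ξ) (hcδ ξ h)).2.1).choose else 0 with hkdef
    have hkspec : ∀ ξ, ξ < θ → k ξ < θ ∧ B (c ξ) < c (k ξ) := by
      intro ξ h
      simp only [hkdef, dif_pos h]
      exact (hccof (B (c ξ)) (hBspec (c ξ) (hcδ ξ h)).2.1).choose_spec
    refine ⟨{α | α < δ ∧ 0 < α ∧ ∀ γ < α, ∃ ξ, ξ < θ ∧ γ < c ξ ∧ c ξ < α ∧ c (k ξ) < α},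
      ⟨?_, ?_, ?_⟩, ?_⟩
    · intro α hα; exact hα.1
    · -- unbounded
      intro α₀ hα₀
      obtain ⟨ξ₀, hξ₀θ, hξ₀⟩ := hccof α₀ hα₀
      set a : ℕ → Ordinal := fun n => Nat.rec (ξ₀ + 1)
        (fun _ ih => max (ih + 1) (Ordinal.bsup ih (fun ξ _ => k ξ + 1))) n with hadef
      have haθ : ∀ n, a n < θ := by
        intro n
        induction n with
        | zero => exact hθsucc ξ₀ hξ₀θ
        | succ n ih =>
          refine max_lt (hθsucc _ ih) ?_
          apply Ordinal.bsup_lt_ord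
          · rw [hθcof]
            exact Cardinal.lt_ord.1 ih
          · intro i hi
            exact hθsucc _ (hkspec i (hi.trans ih)).1
      have hamono : ∀ n, a n < a (n + 1) := fun n =>
        lt_of_lt_of_le (hlt1 (a n)) (le_max_left _ _)
      have haζ : ∀ n, a n ≤ ⨆ n, a n := fun n => Ordinal.le_iSup a n
      have hζθ : (⨆ n, a n) < θ := by
        apply Ordinal.iSup_lt_ord _ haθ
        rw [Cardinal.mk_nat, hθcof]
        exact hκ.trans_lt hcase
      have hξζθ : ∀ ξ, ξ < (⨆ n, a n) → ξ < θ := fun ξ h => h.trans hζθ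
      have hstep : ∀ ξ, ξ < (⨆ n, a n) → ξ + 1 < (⨆ n, a n) ∧ k ξ + 1 < (⨆ n, a n) := by
        intro ξ hξ
        obtain ⟨n, hn⟩ := Ordinal.lt_iSup_iff.1 hξ
        constructor
        · have h1 : ξ + 1 ≤ a n := by
            rw [Ordinal.add_one_eq_succ, Order.succ_le_iff]; exact hn
          exact lt_of_le_of_lt h1 ((hamono n).trans_le (haζ (n + 1)))
        · have h1 : k ξ + 1 ≤ a (n + 1) :=
            le_trans (Ordinal.le_bsup (fun ξ (_ : ξ < a n) => k ξ + 1) ξ hn) (le_max_right _ _)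
          exact lt_of_le_of_lt h1 ((hamono (n + 1)).trans_le (haζ (n + 2)))
      have hcα : ∀ ξ, ξ < (⨆ n, a n) →
          c ξ < Ordinal.bsup (⨆ n, a n) (fun ξ _ => c ξ) := by
        intro ξ hξ
        have h1 := (hstep ξ hξ).1
        exact lt_of_lt_of_le (hcmono ξ (ξ + 1) (hlt1 ξ) (hξζθ _ h1))
          (Ordinal.le_bsup _ (ξ + 1) h1)
      have hαδ : Ordinal.bsup (⨆ n, a n) (fun ξ _ => c ξ) < δ := by
        apply Ordinal.bsup_lt_ord
        · exact Cardinal.lt_ord.1 hζθ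
        · intro i hi
          exact hcδ i (hξζθ i hi)
      have hξ₀ζ : ξ₀ < (⨆ n, a n) := lt_of_lt_of_le (hlt1 ξ₀) (haζ 0)
      have hα₀α : α₀ < Ordinal.bsup (⨆ n, a n) (fun ξ _ => c ξ) :=
        hξ₀.trans (hcα ξ₀ hξ₀ζ)
      refine ⟨_, ⟨hαδ, (show (0:Ordinal) ≤ α₀ from zero_le).trans_lt hα₀α, ?_⟩, hα₀α⟩
      intro γ hγ
      obtain ⟨ξ, hξζ, hγξ⟩ := (Ordinal.lt_bsup _).1 hγ
      have hk1 : k ξ + 1 < (⨆ n, a n) := (hstep ξ hξζ).2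
      have hkζ : k ξ < (⨆ n, a n) := (hlt1 (k ξ)).trans hk1
      exact ⟨ξ, hξζθ ξ hξζ, hγξ, hcα ξ hξζ, hcα (k ξ) hkζ⟩
    · -- closed
      intro α hαδ hα0 hcl
      refine ⟨hαδ, hα0, ?_⟩
      intro γ hγ
      obtain ⟨γ₁, hγ₁e, hγγ₁, hγ₁α⟩ := hcl γ hγ
      obtain ⟨ξ, hξθ, h1, h2, h3⟩ := hγ₁e.2.2 γ hγγ₁
      exact ⟨ξ, hξθ, h1, h2.trans hγ₁α, h3.trans hγ₁α⟩
    · -- every member is chaotic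
      intro α hα _
      refine ⟨u, hucard, ?_⟩
      intro γ hγ
      obtain ⟨ξ, hξθ, h1, h2, h3⟩ := hα.2.2 γ hγ
      have hcξδ : c ξ < δ := h2.trans hα.1
      obtain ⟨hγ'B, hBδ', hnJ⟩ := hBspec (c ξ) hcξδ
      refine ⟨B (c ξ), h1.trans hγ'B, lt_trans (hkspec ξ hξθ).2 h3, ?_⟩
      exact hkey γ (c ξ) (B (c ξ)) h1 hcξδ hnJ


end PaperDefs
end
end

section
/- Let J be an ideal on a cardinal κ and f̄ = ⟨f_α : α < λ⟩ a <_J-increasing sequence of functions κ → Ord. If δ ≤ λ is good (flat) for f̄ (δ ∈ S_gd[f̄,J]), then there is a club e of δ such that every α ∈ e with cf(α) > κ is good for f̄. -/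
noncomputable section

open Cardinal Set Order

namespace PaperDefs

section LtJLemmas

variable {ι : Type 1} {J : Set ι → Prop}

theorem ltJ_trans' (hJ : IsIdealOn J) {a b c : ι → Ordinal} (h1 : LtJ J a b) (h2 : LtJ J b c) :
    LtJ J a c := by
  refine hJ.mono (fun i hi => ?_) (hJ.union_mem h1 h2)
  simp only [Set.mem_setOf_eq, Set.mem_union] at hi ⊢
  by_contra h
  push_neg at h
  exact hi (h.1.trans h.2)

theorem ltJ_irrefl' (hJ : IsIdealOn J) {a : ι → Ordinal} (h : LtJ J a a) : False := by
  have he : {i | ¬ a i < a i} = Set.univ := by ext i; simp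
  exact hJ.proper (he ▸ h)

theorem ltJ_asymm' (hJ : IsIdealOn J) {a b : ι → Ordinal} (h1 : LtJ J a b) (h2 : LtJ J b a) :
    False := ltJ_irrefl' hJ (ltJ_trans' hJ h1 h2)

theorem ltJ_le_right' (hJ : IsIdealOn J) {a b b' : ι → Ordinal} (h1 : LtJ J a b)
    (hb : ∀ i, b i ≤ b' i) : LtJ J a b' := by
  refine hJ.mono (fun i hi => ?_) h1
  simp only [Set.mem_setOf_eq] at hi ⊢
  exact fun hab => hi (hab.trans_le (hb i))

end LtJLemmas

theorem not_isIdealOn_kidx_zero {J : Set (KIdx 0) → Prop} (hJ : IsIdealOn J) : False := by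
  have he : IsEmpty (KIdx 0) := by
    refine ⟨fun x => ?_⟩
    exact (zero_le : (0 : Ordinal) ≤ x.1).not_gt (by simpa [Cardinal.ord_zero] using x.2)
  have : (Set.univ : Set (KIdx 0)) = ∅ := Set.univ_eq_empty_iff.2 he
  exact hJ.proper (this ▸ hJ.empty_mem)

/-- The interleaved recursion: `(seqP b c ζ).1 = α_ζ`, `(seqP b c ζ).2 = ε_ζ`. -/
noncomputable def seqP (b c : Ordinal.{0} → Ordinal.{0}) : Ordinal.{0} → Ordinal.{0} × Ordinal.{0} :=
  fun ζ => Ordinal.limitRecOn ζ (0, c 0)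
    (fun _ p => (max (b p.2) p.1 + 1, max (c (max (b p.2) p.1 + 1)) (p.2 + 1)))
    (fun μ _ ih =>
      (Ordinal.bsup μ (fun ξ h => (ih ξ h).1),
        max (c (Ordinal.bsup μ (fun ξ h => (ih ξ h).1)))
          (Ordinal.bsup μ (fun ξ h => (ih ξ h).2 + 1))))

theorem seqP_zero (b c : Ordinal → Ordinal) : seqP b c 0 = (0, c 0) :=
  Ordinal.limitRecOn_zero _ _ _

theorem seqP_succ (b c : Ordinal → Ordinal) (ξ : Ordinal) :
    seqP b c (Order.succ ξ) =
      (max (b (seqP b c ξ).2) (seqP b c ξ).1 + 1,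
        max (c (max (b (seqP b c ξ).2) (seqP b c ξ).1 + 1)) ((seqP b c ξ).2 + 1)) :=
  Ordinal.limitRecOn_succ _ _ _ _

theorem seqP_limit (b c : Ordinal → Ordinal) {μ : Ordinal} (h : Order.IsSuccLimit μ) :
    seqP b c μ =
      (Ordinal.bsup μ (fun ξ _ => (seqP b c ξ).1),
        max (c (Ordinal.bsup μ (fun ξ _ => (seqP b c ξ).1)))
          (Ordinal.bsup μ (fun ξ _ => (seqP b c ξ).2 + 1))) :=
  Ordinal.limitRecOn_limit _ _ _ _ h

end PaperDefs

namespace PaperDefs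

/-- good points are club-often good below. -/
theorem statement18 (κ : Cardinal.{0}) (J : Set (KIdx κ) → Prop) (hJ : IsIdealOn J)
    (lam : Ordinal) (f : Ordinal → KIdx κ → Ordinal)
    (hinc : ∀ α β : Ordinal, α < β → β < lam → LtJ J (f α) (f β))
    (δ : Ordinal) (hδ : δ ≤ lam)
    (hgd : GoodPoint J f δ) :
    ∃ e : Set Ordinal, IsClubIn e δ ∧ ∀ α ∈ e, κ < α.cof → GoodPoint J f α := by
  classical
  rcases Ordinal.zero_or_succ_or_isSuccLimit δ with rfl | ⟨σ, rfl⟩ | hlim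
  · -- δ = 0
    refine ⟨∅, ⟨Set.empty_subset _, ?_, ?_⟩, ?_⟩
    · intro α hα; exact absurd hα zero_le.not_gt
    · intro α hα; exact absurd hα zero_le.not_gt
    · intro α hα; exact absurd hα (Set.notMem_empty α)
  · -- δ = succ σ : a successor ordinal cannot be a good point
    exfalso
    obtain ⟨A, hA1, hA2, hA3⟩ := hgd
    have hc : (Order.succ σ).cof.ord = 1 := by
      rw [Ordinal.cof_succ, Cardinal.ord_one]
    obtain ⟨ε, hε, h1⟩ := hA2 σ (Order.lt_succ σ)
    rw [hc, Ordinal.lt_one_iff_zero] at hε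
    subst hε
    obtain ⟨α, hα, h2⟩ := hA3 0 (by rw [hc]; exact zero_lt_one)
    rcases lt_or_eq_of_le (Order.lt_succ_iff.mp hα) with h | rfl
    · exact ltJ_asymm' hJ h1
        (ltJ_trans' hJ h2 (hinc α σ h ((Order.lt_succ σ).trans_le hδ)))
    · exact ltJ_asymm' hJ h1 h2
  · -- δ is a limit ordinal: the main case
    obtain ⟨A, hA1, hA2, hA3⟩ := hgd
    set θo : Ordinal := δ.cof.ord with hθodef
    have hreg : δ.cof.IsRegular := Cardinal.isRegular_cof hlim
    have hcof : θo.cof = δ.cof := hreg.cof_eq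
    have hθlim : Order.IsSuccLimit θo := Cardinal.isSuccLimit_ord hreg.aleph0_le
    -- choice functions
    set c : Ordinal → Ordinal := fun β =>
      if h : β < δ then (hA2 β h).choose else 0 with hcdef
    have hcspec : ∀ β, β < δ → c β < θo ∧ LtJ J (f β) (fun i => A i (c β)) := by
      intro β h
      have := (hA2 β h).choose_spec
      simp only [hcdef, dif_pos h]
      exact this
    set b : Ordinal → Ordinal := fun ε =>
      if h : ε < θo then (hA3 ε h).choose else 0 with hbdef
    have hbspec : ∀ ε, ε < θo → b ε < δ ∧ LtJ J (fun i => A i ε) (f (b ε)) := by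
      intro ε h
      have := (hA3 ε h).choose_spec
      simp only [hbdef, dif_pos h]
      exact this
    set aa : Ordinal → Ordinal := fun ζ => (seqP b c ζ).1 with haadef
    set ee : Ordinal → Ordinal := fun ζ => (seqP b c ζ).2 with heedef
    have haz : aa 0 = 0 := by simp only [haadef, seqP_zero]
    have heez : ee 0 = c 0 := by simp only [heedef, seqP_zero]
    have has : ∀ ξ, aa (Order.succ ξ) = max (b (ee ξ)) (aa ξ) + 1 := by
      intro ξ; simp only [haadef, heedef, seqP_succ]
    have hes : ∀ ξ, ee (Order.succ ξ) = max (c (aa (Order.succ ξ))) (ee ξ + 1) := by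
      intro ξ; simp only [heedef, haadef, seqP_succ]
    have hal : ∀ μ, Order.IsSuccLimit μ → aa μ = Ordinal.bsup μ (fun ξ _ => aa ξ) := by
      intro μ h; simp only [haadef, seqP_limit b c h]
    have hel : ∀ μ, Order.IsSuccLimit μ →
        ee μ = max (c (aa μ)) (Ordinal.bsup μ (fun ξ _ => ee ξ + 1)) := by
      intro μ h; simp only [heedef, haadef, seqP_limit b c h]
    -- the key induction
    have key : ∀ ζ, ζ < θo →
        aa ζ < δ ∧ ee ζ < θo ∧ ∀ ξ, ξ < ζ → aa ξ < aa ζ ∧ ee ξ < ee ζ := by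
      intro ζ
      induction ζ using Ordinal.induction with
      | _ ζ IH =>
        intro hζ
        rcases Ordinal.zero_or_succ_or_isSuccLimit ζ with rfl | ⟨ξ, rfl⟩ | hl
        · refine ⟨by rw [haz]; exact hlim.pos, by rw [heez]; exact (hcspec 0 hlim.pos).1, ?_⟩
          intro ξ h; exact absurd h zero_le.not_gt
        · have hξ : ξ < θo := (Order.lt_succ ξ).trans hζ
          obtain ⟨ha1, he1, hm⟩ := IH ξ (Order.lt_succ ξ) hξ
          have hb1 := (hbspec (ee ξ) he1).1
          have haS : aa (Order.succ ξ) < δ := by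
            rw [has ξ, Ordinal.add_one_eq_succ]
            exact hlim.succ_lt (max_lt hb1 ha1)
          have haGT : aa ξ < aa (Order.succ ξ) := by
            rw [has ξ, Ordinal.add_one_eq_succ]
            exact (le_max_right _ _).trans_lt (Order.lt_succ _)
          have heGT : ee ξ < ee (Order.succ ξ) := by
            rw [hes ξ]
            exact (lt_of_lt_of_le (by rw [Ordinal.add_one_eq_succ]; exact Order.lt_succ _)
              (le_max_right _ _))
          have heS : ee (Order.succ ξ) < θo := by
            rw [hes ξ]
            refine max_lt (hcspec _ haS).1 ?_
            rw [Ordinal.add_one_eq_succ]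
            exact hθlim.succ_lt he1
          refine ⟨haS, heS, ?_⟩
          intro ξ' h'
          rcases lt_or_eq_of_le (Order.lt_succ_iff.mp h') with h'' | rfl
          · exact ⟨(hm ξ' h'').1.trans haGT, (hm ξ' h'').2.trans heGT⟩
          · exact ⟨haGT, heGT⟩
        · have hcard : ζ.card < δ.cof := Cardinal.lt_ord.mp hζ
          have haS : aa ζ < δ := by
            rw [hal ζ hl]
            exact Ordinal.bsup_lt_ord hcard (fun ξ h => (IH ξ h (h.trans hζ)).1)
          have heS : ee ζ < θo := by
            rw [hel ζ hl]
            refine max_lt (hcspec _ haS).1 ?_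
            refine Ordinal.bsup_lt_ord (by rw [hcof]; exact hcard) (fun ξ h => ?_)
            rw [Ordinal.add_one_eq_succ]
            exact hθlim.succ_lt (IH ξ h (h.trans hζ)).2.1
          refine ⟨haS, heS, ?_⟩
          intro ξ h
          constructor
          · have h1 : Order.succ ξ < ζ := hl.succ_lt h
            have h2 : aa ξ < aa (Order.succ ξ) :=
              ((IH (Order.succ ξ) h1 (h1.trans hζ)).2.2 ξ (Order.lt_succ ξ)).1
            refine h2.trans_le ?_
            rw [hal ζ hl]
            exact Ordinal.le_bsup (fun ξ _ => aa ξ) (Order.succ ξ) h1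
          · have : ee ξ + 1 ≤ Ordinal.bsup ζ (fun ξ _ => ee ξ + 1) :=
              Ordinal.le_bsup (fun ξ _ => ee ξ + 1) ξ h
            rw [hel ζ hl]
            refine lt_of_lt_of_le (lt_of_lt_of_le ?_ this) (le_max_right _ _)
            rw [Ordinal.add_one_eq_succ]; exact Order.lt_succ _
    have hmono_le : ∀ p q, p ≤ q → q < θo → aa p ≤ aa q := by
      intro p q hpq hq
      rcases lt_or_eq_of_le hpq with h | rfl
      · exact ((key q hq).2.2 p h).1.le
      · exact le_rfl
    have hcle : ∀ ζ, ζ < θo → c (aa ζ) ≤ ee ζ := by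
      intro ζ hζ
      rcases Ordinal.zero_or_succ_or_isSuccLimit ζ with rfl | ⟨ξ, rfl⟩ | hl
      · rw [haz, heez]
      · rw [hes ξ]; exact le_max_left _ _
      · rw [hel ζ hl]; exact le_max_left _ _
    have hfg : ∀ ζ, ζ < θo → LtJ J (f (aa ζ)) (fun i => A i (ee ζ)) := by
      intro ζ hζ
      refine ltJ_le_right' hJ (hcspec (aa ζ) (key ζ hζ).1).2 (fun i => ?_)
      exact (hA1 i).monotoneOn (hcspec (aa ζ) (key ζ hζ).1).1 (key ζ hζ).2.1 (hcle ζ hζ)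
    have hgf : ∀ ζ, Order.succ ζ < θo →
        LtJ J (fun i => A i (ee ζ)) (f (aa (Order.succ ζ))) := by
      intro ζ hsζ
      have hζ : ζ < θo := (Order.lt_succ ζ).trans hsζ
      have hb := hbspec (ee ζ) (key ζ hζ).2.1
      refine ltJ_trans' hJ hb.2 (hinc _ _ ?_ ((key _ hsζ).1.trans_le hδ))
      rw [has ζ, Ordinal.add_one_eq_succ]
      exact (le_max_left _ _).trans_lt (Order.lt_succ _)
    have hge : ∀ ζ, ζ < θo → ζ ≤ ee ζ := by
      intro ζ
      induction ζ using Ordinal.induction with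
      | _ ζ IH =>
        intro hζ
        by_contra h
        push_neg at h
        have h1 : ee ζ ≤ ee (ee ζ) := IH (ee ζ) h (h.trans hζ)
        have h2 : ee (ee ζ) < ee ζ := ((key ζ hζ).2.2 (ee ζ) h).2
        exact absurd (h1.trans_lt h2) (lt_irrefl _)
    have hlt_of : ∀ β γ, β < lam → γ < lam → LtJ J (f β) (f γ) → β < γ := by
      intro β γ hβ hγ hfb
      by_contra h
      push_neg at h
      rcases lt_or_eq_of_le h with h' | rfl
      · exact ltJ_asymm' hJ hfb (hinc γ β h' hβ)
      · exact ltJ_irrefl' hJ hfb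
    have hunb : ∀ β, β < δ → ∃ ζ, Order.succ ζ < θo ∧ β < aa (Order.succ ζ) := by
      intro β hβ
      obtain ⟨hcθ, hcJ⟩ := hcspec β hβ
      have hsucc : Order.succ (c β) < θo := hθlim.succ_lt hcθ
      refine ⟨c β, hsucc, ?_⟩
      have h1 : LtJ J (f β) (fun i => A i (ee (c β))) := by
        refine ltJ_le_right' hJ hcJ (fun i => ?_)
        exact (hA1 i).monotoneOn hcθ (key (c β) hcθ).2.1 (hge (c β) hcθ)
      exact hlt_of β _ (hβ.trans_le hδ) ((key _ hsucc).1.trans_le hδ)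
        (ltJ_trans' hJ h1 (hgf (c β) hsucc))
    refine ⟨aa '' Set.Iio θo, ⟨?_, ?_, ?_⟩, ?_⟩
    · rintro x ⟨ζ, hζ, rfl⟩
      exact (key ζ hζ).1
    · intro β hβ
      obtain ⟨ζ, h1, h2⟩ := hunb β hβ
      exact ⟨aa (Order.succ ζ), ⟨Order.succ ζ, h1, rfl⟩, h2⟩
    · -- closedness
      intro γ hγ hγ0 hcl
      have hSne : {ζ | ζ < θo ∧ γ ≤ aa ζ}.Nonempty := by
        obtain ⟨ζ, h1, h2⟩ := hunb γ hγ
        exact ⟨Order.succ ζ, h1, h2.le⟩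
      set μ := sInf {ζ | ζ < θo ∧ γ ≤ aa ζ} with hμdef
      have hμS : μ < θo ∧ γ ≤ aa μ := csInf_mem hSne
      have hbelow : ∀ ξ, ξ < μ → aa ξ < γ := by
        intro ξ h
        by_contra h'
        push_neg at h'
        exact absurd (csInf_le (OrderBot.bddBelow _)
          (show ξ ∈ {ζ | ζ < θo ∧ γ ≤ aa ζ} from ⟨h.trans hμS.1, h'⟩)) (not_le.mpr h)
      rcases Ordinal.zero_or_succ_or_isSuccLimit μ with hz | ⟨ξ, hsx⟩ | hl
      · exfalso
        have := hμS.2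
        rw [hz, haz] at this
        exact absurd (this.trans_lt hγ0) (lt_irrefl _)
      · exfalso
        have hξμ : ξ < μ := hsx ▸ Order.lt_succ ξ
        obtain ⟨x, hx, h1, h2⟩ := hcl (aa ξ) (hbelow ξ hξμ)
        obtain ⟨ζ', hζ', rfl⟩ := hx
        have hc1 : aa ζ' < aa (Order.succ ξ) := h2.trans_le (hsx ▸ hμS.2)
        have hζξ : ζ' ≤ ξ := by
          rw [← Order.lt_succ_iff]
          by_contra hh
          push_neg at hh
          exact absurd (hmono_le _ _ hh hζ') (not_le.mpr hc1)
        exact absurd (hmono_le ζ' ξ hζξ ((Order.lt_succ ξ).trans (hsx ▸ hμS.1)))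
          (not_le.mpr h1)
      · refine ⟨μ, hμS.1, ?_⟩
        refine le_antisymm ?_ hμS.2
        rw [hal μ hl]
        exact Ordinal.bsup_le (fun ξ h => (hbelow ξ h).le)
    · -- goodness of points of the club with large cofinality
      rintro x ⟨ζ, hζ, rfl⟩ hκ
      rcases Ordinal.zero_or_succ_or_isSuccLimit ζ with rfl | ⟨ξ, rfl⟩ | hlζ
      · exfalso
        rw [haz, Ordinal.cof_zero] at hκ
        exact absurd hκ (Cardinal.zero_le κ).not_gt
      · exfalso
        have : (aa (Order.succ ξ)).cof = 1 := by
          rw [has ξ, Ordinal.add_one_eq_succ, Ordinal.cof_succ]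
        rw [this, Cardinal.lt_one_iff_zero] at hκ
        subst hκ
        exact not_isIdealOn_kidx_zero hJ
      · -- ζ is a limit; aa ζ is a good point
        obtain ⟨t, ht⟩ := Ordinal.exists_fundamental_sequence ζ
        have htζ : ∀ η (h : η < ζ.cof.ord), t η h < ζ := fun η h => ht.lt h
        have hblsub : Ordinal.blsub ζ (fun ξ _ => aa ξ) = aa ζ := by
          refine le_antisymm (Ordinal.blsub_le (fun ξ h => ((key ζ hζ).2.2 ξ h).1)) ?_
          rw [hal ζ hlζ]
          exact Ordinal.bsup_le_blsub _
        have hq : Ordinal.blsub ζ.cof.ord (fun η h => aa (t η h)) = aa ζ := by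
          refine le_antisymm
            (Ordinal.blsub_le (fun η h => ((key ζ hζ).2.2 _ (htζ η h)).1)) ?_
          refine le_of_forall_lt (fun x hx => ?_)
          rw [← hblsub] at hx
          obtain ⟨ξ, hξ, hxle⟩ := Ordinal.lt_blsub_iff.mp hx
          have hξb : ξ < Ordinal.blsub ζ.cof.ord t := by rw [ht.blsub_eq]; exact hξ
          obtain ⟨η, hη, hξle⟩ := Ordinal.lt_blsub_iff.mp hξb
          have hle2 : aa ξ ≤ aa (t η hη) := hmono_le _ _ hξle ((htζ η hη).trans hζ)
          exact (hxle.trans hle2).trans_lt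
            (Ordinal.lt_blsub (fun η h => aa (t η h)) η hη)
        have hc1 : (aa ζ).cof ≤ ζ.cof := by
          calc (aa ζ).cof = (Ordinal.blsub ζ.cof.ord (fun η h => aa (t η h))).cof := by
                rw [hq]
            _ ≤ (ζ.cof.ord).card := Ordinal.cof_blsub_le _
            _ = ζ.cof := Cardinal.card_ord _
        obtain ⟨r, hr⟩ := Ordinal.exists_fundamental_sequence (aa ζ)
        have hwne : ∀ η (h : η < (aa ζ).cof.ord), {ξ | ξ < ζ ∧ r η h < aa ξ}.Nonempty := by
          intro η h
          have hra : r η h < aa ζ := hr.lt h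
          rw [← hblsub] at hra
          obtain ⟨ξ, hξ, hle⟩ := Ordinal.lt_blsub_iff.mp hra
          have hs : Order.succ ξ < ζ := hlζ.succ_lt hξ
          refine ⟨Order.succ ξ, hs, hle.trans_lt ?_⟩
          exact ((key (Order.succ ξ) (hs.trans hζ)).2.2 ξ (Order.lt_succ ξ)).1
        have hwmem : ∀ η (h : η < (aa ζ).cof.ord),
            sInf {ξ | ξ < ζ ∧ r η h < aa ξ} ∈ {ξ | ξ < ζ ∧ r η h < aa ξ} :=
          fun η h => csInf_mem (hwne η h)
        have hwls : Ordinal.blsub (aa ζ).cof.ord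
            (fun η h => sInf {ξ | ξ < ζ ∧ r η h < aa ξ}) = ζ := by
          refine le_antisymm (Ordinal.blsub_le (fun η h => (hwmem η h).1)) ?_
          refine le_of_forall_lt (fun ξ hξ => ?_)
          have h1 : aa ξ < aa ζ := ((key ζ hζ).2.2 ξ hξ).1
          rw [← hr.blsub_eq] at h1
          obtain ⟨η, hη, hle⟩ := Ordinal.lt_blsub_iff.mp h1
          have h2 : ξ < sInf {ξ' | ξ' < ζ ∧ r η hη < aa ξ'} := by
            by_contra hh
            push_neg at hh
            have h3 := hwmem η hη
            have h4 : aa (sInf {ξ' | ξ' < ζ ∧ r η hη < aa ξ'}) ≤ aa ξ :=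
              hmono_le _ _ hh (hξ.trans hζ)
            exact absurd (hle.trans_lt h3.2) (not_lt.mpr h4)
          exact h2.trans (Ordinal.lt_blsub _ η hη)
        have hc2 : ζ.cof ≤ (aa ζ).cof := by
          calc ζ.cof = (Ordinal.blsub (aa ζ).cof.ord
                (fun η h => sInf {ξ | ξ < ζ ∧ r η h < aa ξ})).cof := by rw [hwls]
            _ ≤ ((aa ζ).cof.ord).card := Ordinal.cof_blsub_le _
            _ = (aa ζ).cof := Cardinal.card_ord _
        have hco : (aa ζ).cof.ord = ζ.cof.ord := by rw [le_antisymm hc1 hc2]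
        refine ⟨fun i η => if h : η < ζ.cof.ord then A i (ee (t η h)) else 0, ?_, ?_, ?_⟩
        · intro i
          rw [hco]
          intro x hx y hy hxy
          simp only [Set.mem_Iio] at hx hy
          simp only [dif_pos hx, dif_pos hy]
          have h1 : t x hx < t y hy := ht.strict_mono hx hy hxy
          have hty : t y hy < θo := (htζ y hy).trans hζ
          have h2 : ee (t x hx) < ee (t y hy) := ((key (t y hy) hty).2.2 _ h1).2
          exact (hA1 i) (Set.mem_Iio.mpr (key _ ((htζ x hx).trans hζ)).2.1)
            (Set.mem_Iio.mpr (key _ hty).2.1) h2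
        · intro β hβ
          rw [hal ζ hlζ] at hβ
          obtain ⟨ξ, hξ, hβlt⟩ := (Ordinal.lt_bsup _).mp hβ
          have hξb : ξ < Ordinal.blsub ζ.cof.ord t := by rw [ht.blsub_eq]; exact hξ
          obtain ⟨η, hη, hξle⟩ := Ordinal.lt_blsub_iff.mp hξb
          refine ⟨η, by rw [hco]; exact hη, ?_⟩
          have hty : t η hη < θo := (htζ η hη).trans hζ
          have h1 : β < aa (t η hη) := hβlt.trans_le (hmono_le _ _ hξle hty)
          have h2 : LtJ J (f β) (f (aa (t η hη))) := hinc _ _ h1 ((key _ hty).1.trans_le hδ)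
          simp only [dif_pos hη]
          exact ltJ_trans' hJ h2 (hfg (t η hη) hty)
        · intro η hη'
          have hη : η < ζ.cof.ord := by rw [← hco]; exact hη'
          have hs : Order.succ (t η hη) < ζ := hlζ.succ_lt (htζ η hη)
          refine ⟨aa (Order.succ (t η hη)), ((key ζ hζ).2.2 _ hs).1, ?_⟩
          have h3 := hgf (t η hη) (hs.trans hζ)
          simp only [dif_pos hη]
          exact h3
  

end PaperDefs
end
end
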